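/- arXiv:0801.2339 — 4 statements merged into one kernel-verified Lean document; each statement's English description precedes it below -/
import Mathlib

section
/- Let 𝔤 be a finite-dimensional Lie algebra over a field of characteristic zero such that Tr(ad(b)) = 0 for all b ∈ 𝔤 (e.g. 𝔤 reductive), let A be an associative algebra, and μ : 𝔤 → A a Lie algebra homomorphism. If x' = Σᵢ aᵢ ⊗ bᵢ ∈ (A ⊗ 𝔤)^𝔤 is invariant under the diagonal adjoint action (where bᵢ is a basis of 𝔤), then Σᵢ [μ(bᵢ), aᵢ] = 0; consequently Σᵢ aᵢ μ(bᵢ) = Σᵢ μ(bᵢ) aᵢ. -/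
attribute [local instance] LieRing.ofAssociativeRing

/-- Let `𝔤` be a finite-dimensional Lie algebra over a field of
characteristic zero with `Tr(ad b) = 0` for all `b` (e.g. `𝔤` reductive), `A` an
associative algebra, `μ : 𝔤 → A` a Lie algebra homomorphism.  If
`x' = Σᵢ aᵢ ⊗ bᵢ ∈ (A ⊗ 𝔤)^𝔤` is invariant under the diagonal adjoint action, where
`(bᵢ)` is a basis of `𝔤`, then `Σᵢ [μ(bᵢ), aᵢ] = 0`, and consequently
`Σᵢ aᵢ μ(bᵢ) = Σᵢ μ(bᵢ) aᵢ`. -/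
theorem stmt1 {K : Type*} [Field K] [CharZero K]
    (L : Type*) [LieRing L] [LieAlgebra K L] [Module.Finite K L]
    (A : Type*) [Ring A] [Algebra K A]
    (μ : L →ₗ⁅K⁆ A)
    (htr : ∀ z : L, LinearMap.trace K L ((LieAlgebra.ad K L z : L →ₗ[K] L)) = 0)
    {ι : Type*} [Fintype ι] (b : Module.Basis ι K L) (a : ι → A)
    (hinv : ∀ z : L,
      (LinearMap.rTensor L (LinearMap.mulLeft K (μ z) - LinearMap.mulRight K (μ z))
        + LinearMap.lTensor A ((LieAlgebra.ad K L z : L →ₗ[K] L)))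
        (∑ i, a i ⊗ₜ[K] b i) = 0) :
    (∑ i, ⁅μ (b i), a i⁆) = 0 ∧ (∑ i, a i * μ (b i)) = ∑ i, μ (b i) * a i := by
  classical
  set T : ι → (TensorProduct K A L) →ₗ[K] A := fun j =>
    (TensorProduct.rid K A).toLinearMap ∘ₗ LinearMap.lTensor A (b.coord j) with hT
  have key : ∀ (z : L) (j : ι), (μ z * a j - a j * μ z)
      + ∑ i, (b.repr ⁅z, b i⁆ j) • a i = 0 := by
    intro z j
    have h := congrArg (T j) (hinv z)
    simp only [map_zero, map_add, map_sub, map_sum, smul_sub, Finset.sum_sub_distrib, hT, LinearMap.add_apply, LinearMap.coe_comp,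
      Function.comp_apply,
      LinearMap.rTensor_tmul, LinearMap.lTensor_tmul, LinearMap.sub_apply,
      LinearMap.mulLeft_apply, LinearMap.mulRight_apply, TensorProduct.sub_tmul,
      LinearEquiv.coe_coe, TensorProduct.rid_tmul,
      Module.Basis.coord_apply, Module.Basis.repr_self, LieAlgebra.ad_apply,
      Finsupp.single_apply, Finset.sum_add_distrib, ite_smul, one_smul, zero_smul,
      Finset.sum_ite_eq, Finset.sum_ite_eq', Finset.mem_univ, if_true] at h
    linear_combination (norm := abel) h
  have htr' : ∀ i : ι, ∑ j : ι, b.repr ⁅b j, b i⁆ j = 0 := by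
    intro i
    have h1 := htr (b i)
    rw [LinearMap.trace_eq_matrix_trace K b, Matrix.trace] at h1
    have h2 : ∀ j : ι, b.repr ⁅b j, b i⁆ j
        = -(LinearMap.toMatrix b b ((LieAlgebra.ad K L (b i) : L →ₗ[K] L))).diag j := by
      intro j
      rw [← lie_skew (b j) (b i), map_neg, Finsupp.neg_apply]
      simp [Matrix.diag, LinearMap.toMatrix_apply, LieAlgebra.ad_apply]
    simp only [h2, Finset.sum_neg_distrib, h1, neg_zero]
  have main : (∑ i, ⁅μ (b i), a i⁆) = 0 := by
    have h := Finset.sum_congr rfl (fun j (_ : j ∈ Finset.univ) => key (b j) j)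
    rw [Finset.sum_add_distrib, Finset.sum_comm] at h
    simp only [← Finset.sum_smul, htr', zero_smul, Finset.sum_const_zero, add_zero] at h
    simpa [Ring.lie_def] using h
  refine ⟨main, ?_⟩
  have h0 : (∑ i, μ (b i) * a i) - ∑ i, a i * μ (b i) = 0 := by
    rw [← Finset.sum_sub_distrib]; simpa [Ring.lie_def] using main
  exact (sub_eq_zero.mp h0).symm
end

section
/- Under the hypotheses that 𝔤 is reductive and the adjoint action of 𝔤 on A is completely reducible, the invariants of the quotient (A / A·μ(𝔤))^𝔤 coincide with the quotient of invariants A^𝔤 / (A·μ(𝔤))^𝔤, and moreover (A·μ(𝔤))^𝔤 = (μ(𝔤)·A)^𝔤, so all four descriptions A^𝔤/(Aμ(𝔤))^𝔤, A^𝔤/(μ(𝔤)A)^𝔤, (A/Aμ(𝔤))^𝔤, (A/μ(𝔤)A)^𝔤 of the quantum Hamiltonian reduction agree. -/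
attribute [local instance] LieRing.ofAssociativeRing

namespace QHRAux

variable {A : Type*} [Ring A] [Algebra ℂ A]
variable {L : Type*} [LieRing L] [LieAlgebra ℂ L]

/-- span of brackets `⁅μ z, a⁆` : the "non-trivial part" generated by the action. -/
def gA (μ : L →ₗ⁅ℂ⁆ A) : Submodule ℂ A :=
  Submodule.span ℂ {x : A | ∃ (z : L) (a : A), x = ⁅μ z, a⁆}

variable (μ : L →ₗ⁅ℂ⁆ A)

lemma mem_gA (z : L) (a : A) : ⁅μ z, a⁆ ∈ gA μ :=
  Submodule.subset_span ⟨z, a, rfl⟩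

lemma gA_invariant : ∀ z : L, ∀ x ∈ gA μ, ⁅μ z, x⁆ ∈ gA μ := by
  intro z x hx
  induction hx using Submodule.span_induction with
  | mem x hx =>
      obtain ⟨w, a, rfl⟩ := hx
      rw [leibniz_lie, ← μ.map_lie]
      exact Submodule.add_mem _ (mem_gA μ _ _) (mem_gA μ _ _)
  | zero => simp
  | add x y _ _ hx hy => rw [lie_add]; exact Submodule.add_mem _ hx hy
  | smul c x _ hx => rw [lie_smul]; exact Submodule.smul_mem _ _ hx

/-- the invariants, as a submodule -/
def invSub (μ : L →ₗ⁅ℂ⁆ A) : Submodule ℂ A where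
  carrier := {x : A | ∀ z : L, ⁅μ z, x⁆ = 0}
  add_mem' := by intro a b ha hb z; rw [lie_add, ha z, hb z, add_zero]
  zero_mem' := by intro z; exact lie_zero _
  smul_mem' := by intro c x hx z; rw [lie_smul, hx z, smul_zero]

lemma mem_invSub {x : A} : x ∈ invSub μ ↔ ∀ z : L, ⁅μ z, x⁆ = 0 := Iff.rfl

variable (hcr : ∀ W : Submodule ℂ A, (∀ z : L, ∀ x ∈ W, ⁅μ z, x⁆ ∈ W) →
      ∃ W' : Submodule ℂ A, (∀ z : L, ∀ x ∈ W', ⁅μ z, x⁆ ∈ W') ∧ IsCompl W W')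

lemma decomp {W W' : Submodule ℂ A} (h : IsCompl W W') (x : A) :
    ∃ u ∈ W, ∃ v ∈ W', x = u + v := by
  have hx : x ∈ W ⊔ W' := by rw [h.sup_eq_top]; trivial
  obtain ⟨u, hu, v, hv, huv⟩ := Submodule.mem_sup.mp hx
  exact ⟨u, hu, v, hv, huv.symm⟩

lemma eq_zero_of_mem_inf {W W' : Submodule ℂ A} (h : IsCompl W W') {x : A}
    (hx : x ∈ W) (hx' : x ∈ W') : x = 0 :=
  Submodule.disjoint_def.mp h.disjoint x hx hx'

include hcr in
/-- invariants meet the bracket span trivially -/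
lemma inv_gA_eq_zero : ∀ x ∈ gA μ, (∀ z : L, ⁅μ z, x⁆ = 0) → x = 0 := by
  intro x hxg hxi
  set U : Submodule ℂ A := gA μ ⊓ invSub μ with hU
  have hUinv : ∀ z : L, ∀ y ∈ U, ⁅μ z, y⁆ ∈ U := by
    intro z y hy
    rw [hy.2 z]; exact U.zero_mem
  obtain ⟨U', hU'inv, hcompl⟩ := hcr U hUinv
  have hgU' : gA μ ≤ U' := by
    rw [gA, Submodule.span_le]
    rintro _ ⟨z, a, rfl⟩
    obtain ⟨u, hu, v, hv, rfl⟩ := decomp hcompl a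
    have : ⁅μ z, u + v⁆ = ⁅μ z, v⁆ := by rw [lie_add, hu.2 z, zero_add]
    rw [this]
    exact hU'inv z v hv
  have hxU : x ∈ U := ⟨hxg, hxi⟩
  exact eq_zero_of_mem_inf hcompl hxU (hgU' hxg)

include hcr in
/-- an invariant submodule with no nonzero invariant elements is inside `gA`. -/
lemma le_gA_of_no_inv (C : Submodule ℂ A) (hC : ∀ z : L, ∀ x ∈ C, ⁅μ z, x⁆ ∈ C)
    (h0 : ∀ x ∈ C, (∀ z : L, ⁅μ z, x⁆ = 0) → x = 0) : C ≤ gA μ := by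
  set D : Submodule ℂ A := Submodule.span ℂ {x : A | ∃ (z : L), ∃ c ∈ C, x = ⁅μ z, c⁆} with hD
  have hDC : D ≤ C := by
    rw [hD, Submodule.span_le]
    rintro _ ⟨z, c, hc, rfl⟩
    exact hC z c hc
  have hDgA : D ≤ gA μ := by
    rw [hD, Submodule.span_le]
    rintro _ ⟨z, c, _, rfl⟩
    exact mem_gA μ z c
  have hDinv : ∀ z : L, ∀ x ∈ D, ⁅μ z, x⁆ ∈ D := by
    intro z x hx
    induction hx using Submodule.span_induction with
    | mem x hx =>
        obtain ⟨w, c, hc, rfl⟩ := hx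
        rw [leibniz_lie, ← μ.map_lie]
        exact Submodule.add_mem _ (Submodule.subset_span ⟨_, c, hc, rfl⟩)
          (Submodule.subset_span ⟨w, _, hC z c hc, rfl⟩)
    | zero => simp
    | add x y _ _ hx hy => rw [lie_add]; exact Submodule.add_mem _ hx hy
    | smul r x _ hx => rw [lie_smul]; exact Submodule.smul_mem _ _ hx
  obtain ⟨D', hD'inv, hcompl⟩ := hcr D hDinv
  intro c hc
  obtain ⟨d, hd, e, he, rfl⟩ := decomp hcompl c
  have heC : e ∈ C := by
    have : (d + e) - d ∈ C := Submodule.sub_mem _ hc (hDC hd)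
    simpa using this
  have he0 : e = 0 := by
    apply h0 e heC
    intro z
    apply eq_zero_of_mem_inf hcompl
    · exact Submodule.subset_span ⟨z, e, heC, rfl⟩
    · exact hD'inv z e he
  rw [he0, add_zero]
  exact hDgA hd

include hcr in
/-- every element of an invariant submodule is an invariant element of it plus
something in `gA`. -/
lemma invariant_decomp (S : Submodule ℂ A) (hS : ∀ z : L, ∀ x ∈ S, ⁅μ z, x⁆ ∈ S) :
    ∀ x ∈ S, ∃ t ∈ S, (∀ z : L, ⁅μ z, t⁆ = 0) ∧ x - t ∈ gA μ := by
  set T : Submodule ℂ A := S ⊓ invSub μ with hT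
  have hTinv : ∀ z : L, ∀ y ∈ T, ⁅μ z, y⁆ ∈ T := by
    intro z y hy; rw [hy.2 z]; exact T.zero_mem
  obtain ⟨T', hT'inv, hcompl⟩ := hcr T hTinv
  set C : Submodule ℂ A := S ⊓ T' with hCdef
  have hCinv : ∀ z : L, ∀ y ∈ C, ⁅μ z, y⁆ ∈ C := by
    intro z y hy
    exact ⟨hS z y hy.1, hT'inv z y hy.2⟩
  have hC0 : ∀ y ∈ C, (∀ z : L, ⁅μ z, y⁆ = 0) → y = 0 := by
    intro y hy hyi
    exact eq_zero_of_mem_inf hcompl ⟨hy.1, hyi⟩ hy.2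
  have hCgA : C ≤ gA μ := le_gA_of_no_inv μ hcr C hCinv hC0
  intro x hx
  obtain ⟨t, ht, w, hw, rfl⟩ := decomp hcompl x
  refine ⟨t, ht.1, ht.2, ?_⟩
  have hwS : w ∈ S := by
    have : (t + w) - t ∈ S := Submodule.sub_mem _ hx ht.1
    simpa using this
  have : (t + w) - t ∈ C := by rw [add_sub_cancel_left]; exact (⟨hwS, hw⟩ : w ∈ C)
  exact hCgA this

end QHRAux

open QHRAux

/-- Suppose `𝔤` is reductive (here: finite-dimensional with
`Tr(ad z) = 0` for all `z`) and the adjoint action `a ↦ [μ(z), a]` of `𝔤` on the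
associative algebra `A` is completely reducible (every invariant subspace has an
invariant complement).  Then the invariants of the quotient `(A / A·μ(𝔤))^𝔤`
coincide with the quotient of invariants `A^𝔤 / (A·μ(𝔤))^𝔤` (every invariant of the
quotient is represented by an invariant element of `A`), and moreover
`(A·μ(𝔤))^𝔤 = (μ(𝔤)·A)^𝔤`; together with the analogous statement for the right
ideal, all four descriptions of the quantum Hamiltonian reduction agree. -/
theorem stmt2 (A : Type*) [Ring A] [Algebra ℂ A]
    (L : Type*) [LieRing L] [LieAlgebra ℂ L] [Module.Finite ℂ L]
    (μ : L →ₗ⁅ℂ⁆ A)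
    (htr : ∀ z : L, LinearMap.trace ℂ L ((LieAlgebra.ad ℂ L z : L →ₗ[ℂ] L)) = 0)
    (hcr : ∀ W : Submodule ℂ A, (∀ z : L, ∀ x ∈ W, ⁅μ z, x⁆ ∈ W) →
      ∃ W' : Submodule ℂ A, (∀ z : L, ∀ x ∈ W', ⁅μ z, x⁆ ∈ W') ∧ IsCompl W W')
    (Jl Jr : Submodule ℂ A)
    (hJl : Jl = Submodule.span ℂ {x : A | ∃ (a : A) (z : L), x = a * μ z})
    (hJr : Jr = Submodule.span ℂ {x : A | ∃ (a : A) (z : L), x = μ z * a}) :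
    ((Jl : Set A) ∩ {x : A | ∀ z : L, ⁅μ z, x⁆ = 0}
        = (Jr : Set A) ∩ {x : A | ∀ z : L, ⁅μ z, x⁆ = 0})
    ∧ (∀ x : A, (∀ z : L, ⁅μ z, x⁆ ∈ Jl) →
        ∃ y : A, (∀ z : L, ⁅μ z, y⁆ = 0) ∧ x - y ∈ Jl)
    ∧ (∀ x : A, (∀ z : L, ⁅μ z, x⁆ ∈ Jr) →
        ∃ y : A, (∀ z : L, ⁅μ z, y⁆ = 0) ∧ x - y ∈ Jr) := by
  -- basic bracket identities in the associative algebra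
  have lie_mul' : ∀ x a b : A, ⁅x, a * b⁆ = ⁅x, a⁆ * b + a * ⁅x, b⁆ := by
    intro x a b; simp only [Ring.lie_def]; noncomm_ring
  -- invariance of Jl
  have hJlinv : ∀ z : L, ∀ x ∈ Jl, ⁅μ z, x⁆ ∈ Jl := by
    intro z x hx
    rw [hJl] at hx ⊢
    induction hx using Submodule.span_induction with
    | mem x hx =>
        obtain ⟨a, w, rfl⟩ := hx
        rw [lie_mul' (μ z) a (μ w), ← μ.map_lie]
        exact Submodule.add_mem _ (Submodule.subset_span ⟨_, w, rfl⟩)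
          (Submodule.subset_span ⟨a, _, rfl⟩)
    | zero => simp
    | add x y _ _ hx hy => rw [lie_add]; exact Submodule.add_mem _ hx hy
    | smul c x _ hx => rw [lie_smul]; exact Submodule.smul_mem _ _ hx
  -- invariance of Jr
  have hJrinv : ∀ z : L, ∀ x ∈ Jr, ⁅μ z, x⁆ ∈ Jr := by
    intro z x hx
    rw [hJr] at hx ⊢
    induction hx using Submodule.span_induction with
    | mem x hx =>
        obtain ⟨a, w, rfl⟩ := hx
        have : ⁅μ z, μ w * a⁆ = μ ⁅z, w⁆ * a + μ w * ⁅μ z, a⁆ := by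
          rw [lie_mul' (μ z) (μ w) a, ← μ.map_lie]
        rw [this]
        exact Submodule.add_mem _ (Submodule.subset_span ⟨a, _, rfl⟩)
          (Submodule.subset_span ⟨_, w, rfl⟩)
    | zero => simp
    | add x y _ _ hx hy => rw [lie_add]; exact Submodule.add_mem _ hx hy
    | smul c x _ hx => rw [lie_smul]; exact Submodule.smul_mem _ _ hx
  -- Jl ≤ Jr ⊔ gA and Jr ≤ Jl ⊔ gA
  have hlr : Jl ≤ Jr ⊔ gA μ := by
    rw [hJl, Submodule.span_le]
    rintro _ ⟨a, z, rfl⟩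
    have : a * μ z = μ z * a - ⁅μ z, a⁆ := by rw [Ring.lie_def]; noncomm_ring
    rw [this]
    exact Submodule.sub_mem _
      (Submodule.mem_sup_left (hJr ▸ Submodule.subset_span ⟨a, z, rfl⟩))
      (Submodule.mem_sup_right (mem_gA μ z a))
  have hrl : Jr ≤ Jl ⊔ gA μ := by
    rw [hJr, Submodule.span_le]
    rintro _ ⟨a, z, rfl⟩
    have : μ z * a = a * μ z + ⁅μ z, a⁆ := by rw [Ring.lie_def]; noncomm_ring
    rw [this]
    exact Submodule.add_mem _
      (Submodule.mem_sup_left (hJl ▸ Submodule.subset_span ⟨a, z, rfl⟩))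
      (Submodule.mem_sup_right (mem_gA μ z a))
  -- the main transfer argument for part 1
  have key : ∀ (J K : Submodule ℂ A), (∀ z : L, ∀ x ∈ K, ⁅μ z, x⁆ ∈ K) →
      J ≤ K ⊔ gA μ → ∀ x ∈ J, (∀ z : L, ⁅μ z, x⁆ = 0) → x ∈ K := by
    intro J K hKinv hJK x hx hxi
    obtain ⟨y, hy, g, hg, hyg⟩ := Submodule.mem_sup.mp (hJK hx)
    obtain ⟨t, htK, hti, hytg⟩ := invariant_decomp μ hcr K hKinv y hy
    -- x - t ∈ gA and invariant, hence zero
    have hxt_g : x - t ∈ gA μ := by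
      have : x - t = (y - t) + g := by rw [← hyg]; abel
      rw [this]
      exact Submodule.add_mem _ hytg hg
    have hxt_i : ∀ z : L, ⁅μ z, x - t⁆ = 0 := by
      intro z; rw [lie_sub, hxi z, hti z, sub_zero]
    have : x - t = 0 := inv_gA_eq_zero μ hcr _ hxt_g hxt_i
    have hxt : x = t := sub_eq_zero.mp this
    rw [hxt]; exact htK
  refine ⟨?_, ?_, ?_⟩
  · ext x
    simp only [Set.mem_inter_iff, SetLike.mem_coe, Set.mem_setOf_eq]
    constructor
    · rintro ⟨hx, hxi⟩
      exact ⟨key Jl Jr hJrinv hlr x hx hxi, hxi⟩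
    · rintro ⟨hx, hxi⟩
      exact ⟨key Jr Jl hJlinv hrl x hx hxi, hxi⟩
  · intro x hx
    obtain ⟨W', hW'inv, hcompl⟩ := hcr Jl hJlinv
    obtain ⟨j, hj, w, hw, rfl⟩ := decomp hcompl x
    refine ⟨w, ?_, by simpa using hj⟩
    intro z
    have h1 : ⁅μ z, w⁆ ∈ W' := hW'inv z w hw
    have h2 : ⁅μ z, w⁆ ∈ Jl := by
      have : ⁅μ z, w⁆ = ⁅μ z, j + w⁆ - ⁅μ z, j⁆ := by rw [lie_add]; abel
      rw [this]
      exact Submodule.sub_mem _ (hx z) (hJlinv z j hj)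
    exact eq_zero_of_mem_inf hcompl h2 h1
  · intro x hx
    obtain ⟨W', hW'inv, hcompl⟩ := hcr Jr hJrinv
    obtain ⟨j, hj, w, hw, rfl⟩ := decomp hcompl x
    refine ⟨w, ?_, by simpa using hj⟩
    intro z
    have h1 : ⁅μ z, w⁆ ∈ W' := hW'inv z w hw
    have h2 : ⁅μ z, w⁆ ∈ Jr := by
      have : ⁅μ z, w⁆ = ⁅μ z, j + w⁆ - ⁅μ z, j⁆ := by rw [lie_add]; abel
      rw [this]
      exact Submodule.sub_mem _ (hx z) (hJrinv z j hj)
    exact eq_zero_of_mem_inf hcompl h2 h1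
end

section
/- Let 𝔤 = 𝔤₁ ⊕ 𝔤₂ be a direct sum of reductive Lie algebras acting completely reducibly on an associative algebra A with quantum moment map μ = μ₁ ⊕ μ₂. Then μ₂ descends to a Lie algebra map μ̄₂ : 𝔤₂ → 𝔄(A, 𝔤₁, μ₁), and there is an algebra isomorphism 𝔄(A, 𝔤, μ) ≅ 𝔄(𝔄(A, 𝔤₁, μ₁), 𝔤₂, μ̄₂) (quantum Hamiltonian reduction in stages). -/
variable (A : Type*) [Ring A] (L : Type*)

/-- The invariant subalgebra `A^𝔤` of an associative algebra under the adjoint action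
`x ↦ [μ(z), x]` of a quantum moment map `μ : 𝔤 → A`: the elements commuting with all
`μ(z)`. -/
def qhrSubring (μ : L → A) : Subring A where
  carrier := {x : A | ∀ z : L, μ z * x = x * μ z}
  zero_mem' := by intro z; simp
  one_mem' := by intro z; simp
  add_mem' := by
    intro x y hx hy z
    rw [mul_add, add_mul, hx z, hy z]
  neg_mem' := by
    intro x hx z
    rw [mul_neg, neg_mul, hx z]
  mul_mem' := by
    intro x y hx hy z
    rw [← mul_assoc, hx z, mul_assoc, hy z, ← mul_assoc]

/-- The two-sided ideal `(A·μ(𝔤))^𝔤` of `A^𝔤` (the two-sided ideal of the invariant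
subalgebra generated by the invariant part of the left ideal `A·μ(𝔤)`). -/
noncomputable def qhrIdeal (μ : L → A) : TwoSidedIdeal (qhrSubring A L μ) :=
  TwoSidedIdeal.span
    {x : qhrSubring A L μ |
      (x : A) ∈ AddSubgroup.closure {y : A | ∃ (a : A) (z : L), y = a * μ z}}

/-- The quantum Hamiltonian reduction `𝔄(A, 𝔤, μ) = A^𝔤 / (A·μ(𝔤))^𝔤`. -/
abbrev QHR (μ : L → A) : Type _ := (qhrIdeal A L μ).ringCon.Quotient

/-- The quotient map `A^𝔤 → 𝔄(A, 𝔤, μ)`. -/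
noncomputable def qhrMk (μ : L → A) : qhrSubring A L μ →+* QHR A L μ :=
  (qhrIdeal A L μ).ringCon.mk'

attribute [local instance 100] LieRing.ofAssociativeRing

set_option maxHeartbeats 1000000
set_option synthInstance.maxHeartbeats 400000

namespace QHRStage

variable {A L}

/-- The closure of the generating set is a two-sided-ideal-worthy set inside the subring. -/
lemma mem_qhrIdeal_iff (μ : L → A) (x : qhrSubring A L μ) :
    x ∈ qhrIdeal A L μ ↔
      (x : A) ∈ AddSubgroup.closure {y : A | ∃ (a : A) (z : L), y = a * μ z} := by
  set S : Set A := {y : A | ∃ (a : A) (z : L), y = a * μ z} with hS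
  constructor
  · intro hx
    let I : TwoSidedIdeal (qhrSubring A L μ) :=
      TwoSidedIdeal.mk' {x : qhrSubring A L μ | (x : A) ∈ AddSubgroup.closure S}
        ((AddSubgroup.closure S).zero_mem)
        (fun {x y} hx hy => show ((x:A)+(y:A)) ∈ AddSubgroup.closure S from AddSubgroup.add_mem _ hx hy)
        (fun {x} hx => show (-(x:A)) ∈ AddSubgroup.closure S from AddSubgroup.neg_mem _ hx)
        (fun {x y} hy => by
          show ((x : A) * (y : A)) ∈ AddSubgroup.closure S
          have hle : AddSubgroup.closure S ≤
              (AddSubgroup.closure S).comap (AddMonoidHom.mulLeft (x : A)) := by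
            refine AddSubgroup.closure_le _ |>.2 ?_
            rintro b ⟨a, z, rfl⟩
            exact AddSubgroup.subset_closure ⟨(x : A) * a, z,
              show (x:A) * (a * μ z) = (x:A) * a * μ z from (mul_assoc _ _ _).symm⟩
          exact hle hy)
        (fun {x y} hx => by
          show ((x : A) * (y : A)) ∈ AddSubgroup.closure S
          have hle : AddSubgroup.closure S ≤
              (AddSubgroup.closure S).comap (AddMonoidHom.mulRight (y : A)) := by
            refine AddSubgroup.closure_le _ |>.2 ?_
            rintro b ⟨a, z, rfl⟩
            refine AddSubgroup.subset_closure ⟨a * (y : A), z, ?_⟩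
            show a * μ z * (y:A) = a * (y:A) * μ z
            rw [mul_assoc, mul_assoc, y.2 z]
          exact hle hx)
    have hle := TwoSidedIdeal.mem_span_iff.mp hx I
      (fun y hy => by simpa [I, TwoSidedIdeal.mem_mk'] using hy)
    simpa [I, TwoSidedIdeal.mem_mk'] using hle
  · intro hx
    exact TwoSidedIdeal.subset_span hx

lemma qhrMk_eq_iff (μ : L → A) (x y : qhrSubring A L μ) :
    qhrMk A L μ x = qhrMk A L μ y ↔ x - y ∈ qhrIdeal A L μ := by
  show ((x : (qhrIdeal A L μ).ringCon.Quotient) = y) ↔ _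
  rw [RingCon.eq, TwoSidedIdeal.rel_iff]

lemma qhrMk_eq_zero_iff (μ : L → A) (x : qhrSubring A L μ) :
    qhrMk A L μ x = 0 ↔ x ∈ qhrIdeal A L μ := by
  have := qhrMk_eq_iff μ x 0
  rw [map_zero] at this
  simpa using this

lemma qhrMk_surjective (μ : L → A) : Function.Surjective (qhrMk A L μ) :=
  fun q => Quotient.inductionOn' q (fun a => ⟨a, rfl⟩)

/-- Lifting a ring hom through a ring congruence quotient. -/
def ringConLift {R S : Type*} [Ring R] [Ring S] (c : RingCon R) (f : R →+* S)
    (h : ∀ a b, c a b → f a = f b) : c.Quotient →+* S where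
  toFun := Quotient.lift ⇑f (fun a b hab => h a b hab)
  map_one' := f.map_one
  map_zero' := f.map_zero
  map_add' := fun x y => Quotient.inductionOn₂ x y (fun a b => f.map_add a b)
  map_mul' := fun x y => Quotient.inductionOn₂ x y (fun a b => f.map_mul a b)

@[simp] lemma ringConLift_mk {R S : Type*} [Ring R] [Ring S] (c : RingCon R) (f : R →+* S)
    (h : ∀ a b, c a b → f a = f b) (a : R) : ringConLift c f h (a : c.Quotient) = f a := rfl

end QHRStage
namespace QHRStage2

open Submodule

variable {A : Type*} [Ring A] [Algebra ℂ A]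
variable {L₁ L₂ : Type*} [LieRing L₁] [LieAlgebra ℂ L₁] [LieRing L₂] [LieAlgebra ℂ L₂]

section Defs
variable (μ₁ : L₁ →ₗ⁅ℂ⁆ A) (μ₂ : L₂ →ₗ⁅ℂ⁆ A)

/-- generating set of the left ideal A·ν(L) -/
def genSet {L : Type*} (ν : L → A) : Set A := {y : A | ∃ (a : A) (z : L), y = a * ν z}

/-- the commutant of the image of ν, as a ℂ-submodule -/
def invSubmodule {L : Type*} (ν : L → A) : Submodule ℂ A where
  carrier := {x : A | ∀ z : L, ν z * x = x * ν z}
  zero_mem' := by intro z; simp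
  add_mem' := by
    intro x y hx hy z
    rw [mul_add, add_mul, hx z, hy z]
  smul_mem' := by
    intro c x hx z
    rw [mul_smul_comm, smul_mul_assoc, hx z]

lemma mem_invSubmodule {L : Type*} (ν : L → A) (x : A) :
    x ∈ invSubmodule ν ↔ ∀ z : L, ν z * x = x * ν z := Iff.rfl

lemma mem_invSubmodule' {L : Type*} (ν : L → A) (x : A) :
    x ∈ invSubmodule ν ↔ ∀ z : L, ⁅ν z, x⁆ = 0 := by
  simp only [mem_invSubmodule, Ring.lie_def, sub_eq_zero]

/-- adjoint action of an element, as a linear map -/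
def adL (a : A) : A →ₗ[ℂ] A := LinearMap.mulLeft ℂ a - LinearMap.mulRight ℂ a

lemma adL_apply (a x : A) : adL a x = ⁅a, x⁆ := rfl

def J1 : Submodule ℂ A := span ℂ (genSet (⇑μ₁))
def J2 : Submodule ℂ A := span ℂ (genSet (⇑μ₂))
def G1 : Submodule ℂ A := span ℂ {y : A | ∃ (w : L₁) (x : A), y = ⁅μ₁ w, x⁆}
def GJ1 : Submodule ℂ A :=
  span ℂ {y : A | ∃ (w : L₁) (x : A), x ∈ J1 μ₁ ∧ y = ⁅μ₁ w, x⁆}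
def J2F1 : Submodule ℂ A :=
  span ℂ {y : A | ∃ (b : A) (z : L₂), b ∈ invSubmodule (⇑μ₁) ∧ y = b * μ₂ z}

end Defs

section Lemmas

variable (μ₁ : L₁ →ₗ⁅ℂ⁆ A) (μ₂ : L₂ →ₗ⁅ℂ⁆ A)

variable (hcomm : ∀ (x : L₁) (z : L₂), ⁅μ₁ x, μ₂ z⁆ = 0)

/-- span = additive closure for the generating sets (they are ℂ-smul stable) -/
lemma mem_closure_genSet_iff {L : Type*} (ν : L → A) (x : A) :
    x ∈ AddSubgroup.closure (genSet ν) ↔ x ∈ span ℂ (genSet ν) := by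
  constructor
  · intro h
    refine AddSubgroup.closure_induction (fun y hy => subset_span hy) (zero_mem _)
      (fun a b _ _ ha hb => add_mem ha hb) (fun a _ ha => neg_mem ha) h
  · intro h
    refine span_induction (fun y hy => AddSubgroup.subset_closure hy) (AddSubgroup.zero_mem _)
      (fun a b _ _ ha hb => AddSubgroup.add_mem _ ha hb) ?_ h
    intro c a _ ha
    -- smul stability of the closure
    have : AddSubgroup.closure (genSet (A := A) ν) ≤
        (AddSubgroup.closure (genSet ν)).comap
          (DistribMulAction.toAddMonoidHom A c) := by
      refine AddSubgroup.closure_le _ |>.2 ?_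
      rintro b ⟨a', z, rfl⟩
      exact AddSubgroup.subset_closure ⟨c • a', z, (smul_mul_assoc c a' (ν z)).symm⟩
    exact this ha

include hcomm

lemma mu_comm (w : L₁) (z : L₂) : μ₁ w * μ₂ z = μ₂ z * μ₁ w :=
  sub_eq_zero.mp (by have h := hcomm w z; rwa [Ring.lie_def] at h)

-- Invariance lemmas.  `Inv W` means `∀ z, adL (μ z) W ≤ W`.
lemma inv_F1 (z : L₁ ⊕ L₂) :
    invSubmodule (⇑μ₁) ≤ (invSubmodule (A := A) (⇑μ₁)).comap (adL (Sum.elim (⇑μ₁) (⇑μ₂) z)) := by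
  intro x hx
  simp only [mem_comap, mem_invSubmodule']
  rw [mem_invSubmodule'] at hx
  intro w
  rw [adL_apply, leibniz_lie, hx, lie_zero, add_zero]
  cases z with
  | inl w' =>
    show ⁅⁅μ₁ w, μ₁ w'⁆, x⁆ = 0
    rw [← LieHom.map_lie]
    exact hx _
  | inr z' =>
    show ⁅⁅μ₁ w, μ₂ z'⁆, x⁆ = 0
    rw [hcomm, zero_lie]

lemma inv_J1 (z : L₁ ⊕ L₂) :
    J1 μ₁ ≤ (J1 (A := A) μ₁).comap (adL (Sum.elim (⇑μ₁) (⇑μ₂) z)) := by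
  rw [J1, span_le]
  rintro y ⟨a, w, rfl⟩
  simp only [SetLike.mem_coe, mem_comap]
  rw [adL_apply]
  have expand : ⁅Sum.elim (⇑μ₁) (⇑μ₂) z, a * μ₁ w⁆
      = ⁅Sum.elim (⇑μ₁) (⇑μ₂) z, a⁆ * μ₁ w + a * ⁅Sum.elim (⇑μ₁) (⇑μ₂) z, μ₁ w⁆ := by
    simp only [Ring.lie_def]
    noncomm_ring
  rw [expand]
  refine add_mem (subset_span ⟨_, w, rfl⟩) ?_
  cases z with
  | inl w' =>
    show a * ⁅μ₁ w', μ₁ w⁆ ∈ J1 μ₁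
    rw [← LieHom.map_lie]
    exact subset_span ⟨a, _, rfl⟩
  | inr z' =>
    show a * ⁅μ₂ z', μ₁ w⁆ ∈ J1 μ₁
    rw [← lie_skew, hcomm, neg_zero, mul_zero]
    exact zero_mem _

lemma inv_J2 (z : L₁ ⊕ L₂) :
    J2 μ₂ ≤ (J2 (A := A) μ₂).comap (adL (Sum.elim (⇑μ₁) (⇑μ₂) z)) := by
  rw [J2, span_le]
  rintro y ⟨a, w, rfl⟩
  simp only [SetLike.mem_coe, mem_comap]
  rw [adL_apply]
  have expand : ⁅Sum.elim (⇑μ₁) (⇑μ₂) z, a * μ₂ w⁆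
      = ⁅Sum.elim (⇑μ₁) (⇑μ₂) z, a⁆ * μ₂ w + a * ⁅Sum.elim (⇑μ₁) (⇑μ₂) z, μ₂ w⁆ := by
    simp only [Ring.lie_def]
    noncomm_ring
  rw [expand]
  refine add_mem (subset_span ⟨_, w, rfl⟩) ?_
  cases z with
  | inl w' =>
    show a * ⁅μ₁ w', μ₂ w⁆ ∈ J2 μ₂
    rw [hcomm, mul_zero]
    exact zero_mem _
  | inr z' =>
    show a * ⁅μ₂ z', μ₂ w⁆ ∈ J2 μ₂
    rw [← LieHom.map_lie]
    exact subset_span ⟨a, _, rfl⟩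

lemma inv_G1 (z : L₁ ⊕ L₂) :
    G1 μ₁ ≤ (G1 (A := A) μ₁).comap (adL (Sum.elim (⇑μ₁) (⇑μ₂) z)) := by
  rw [G1, span_le]
  rintro y ⟨w, x, rfl⟩
  simp only [SetLike.mem_coe, mem_comap]
  rw [adL_apply, leibniz_lie]
  refine add_mem ?_ (subset_span ⟨w, _, rfl⟩)
  cases z with
  | inl w' =>
    show ⁅⁅μ₁ w', μ₁ w⁆, x⁆ ∈ G1 μ₁
    rw [← LieHom.map_lie]
    exact subset_span ⟨_, x, rfl⟩
  | inr z' =>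
    show ⁅⁅μ₂ z', μ₁ w⁆, x⁆ ∈ G1 μ₁
    have h0 : ⁅μ₂ z', μ₁ w⁆ = (0 : A) := by rw [← lie_skew, hcomm, neg_zero]
    rw [h0, zero_lie]
    exact zero_mem _

lemma inv_GJ1 (z : L₁ ⊕ L₂) :
    GJ1 μ₁ ≤ (GJ1 (A := A) μ₁).comap (adL (Sum.elim (⇑μ₁) (⇑μ₂) z)) := by
  rw [GJ1, span_le]
  rintro y ⟨w, x, hx, rfl⟩
  simp only [SetLike.mem_coe, mem_comap]
  rw [adL_apply, leibniz_lie]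
  refine add_mem ?_ ?_
  · cases z with
    | inl w' =>
      show ⁅⁅μ₁ w', μ₁ w⁆, x⁆ ∈ GJ1 μ₁
      rw [← LieHom.map_lie]
      exact subset_span ⟨_, x, hx, rfl⟩
    | inr z' =>
      show ⁅⁅μ₂ z', μ₁ w⁆, x⁆ ∈ GJ1 μ₁
      have h0 : ⁅μ₂ z', μ₁ w⁆ = (0 : A) := by rw [← lie_skew, hcomm, neg_zero]
      rw [h0, zero_lie]
      exact zero_mem _
  · refine subset_span ⟨w, _, ?_, rfl⟩
    have := inv_J1 μ₁ μ₂ hcomm z hx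
    rwa [mem_comap, adL_apply] at this

lemma GJ1_le_J1 : GJ1 μ₁ ≤ J1 (A := A) μ₁ := by
  rw [GJ1, span_le]
  rintro y ⟨w, x, hx, rfl⟩
  have := inv_J1 μ₁ μ₂ hcomm (Sum.inl w) hx
  rwa [mem_comap, adL_apply] at this

omit hcomm in
lemma GJ1_le_G1 : GJ1 μ₁ ≤ G1 (A := A) μ₁ := by
  rw [GJ1, span_le]
  rintro y ⟨w, x, _, rfl⟩
  exact subset_span ⟨w, x, rfl⟩

lemma F1_mul_mu2 (x : A) (hx : x ∈ invSubmodule (⇑μ₁)) (z : L₂) :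
    x * μ₂ z ∈ invSubmodule (A := A) (⇑μ₁) := by
  intro w
  rw [← mul_assoc, hx w, mul_assoc, mu_comm μ₁ μ₂ hcomm w z, ← mul_assoc]

lemma G1_mul_mu2 (z : L₂) :
    G1 μ₁ ≤ (G1 (A := A) μ₁).comap (LinearMap.mulRight ℂ (μ₂ z)) := by
  rw [G1, span_le]
  rintro y ⟨w, x, rfl⟩
  simp only [SetLike.mem_coe, mem_comap, LinearMap.mulRight_apply]
  refine Submodule.subset_span ⟨w, x * μ₂ z, ?_⟩
  simp only [Ring.lie_def]
  rw [sub_mul, mul_assoc, mul_assoc, mu_comm μ₁ μ₂ hcomm w z, ← mul_assoc, ← mul_assoc]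

lemma J2F1_le_F1 :
    J2F1 μ₁ μ₂ ≤ invSubmodule (A := A) (⇑μ₁) := by
  rw [J2F1, span_le]
  rintro y ⟨b, z, hb, rfl⟩
  exact F1_mul_mu2 μ₁ μ₂ hcomm b hb z

omit hcomm in
lemma span_genSet_sum :
    span ℂ (genSet (A := A) (Sum.elim (⇑μ₁) (⇑μ₂))) = J1 μ₁ ⊔ J2 μ₂ := by
  rw [J1, J2, ← span_union]
  congr 1
  ext y
  constructor
  · rintro ⟨a, (w | z), rfl⟩
    · exact Or.inl ⟨a, w, rfl⟩
    · exact Or.inr ⟨a, z, rfl⟩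
  · rintro (⟨a, w, rfl⟩ | ⟨a, z, rfl⟩)
    · exact ⟨a, Sum.inl w, rfl⟩
    · exact ⟨a, Sum.inr z, rfl⟩

-- generic projection facts
section Proj
variable {F G : Submodule ℂ A} (h : IsCompl F G)

noncomputable def projFG : A →ₗ[ℂ] A := F.subtype ∘ₗ Submodule.linearProjOfIsCompl F G h

omit hcomm in
lemma projFG_mem (x : A) : projFG h x ∈ F := (Submodule.linearProjOfIsCompl F G h x).2

omit hcomm in
lemma projFG_eq_self {x : A} (hx : x ∈ F) : projFG h x = x := by
  show (Submodule.linearProjOfIsCompl F G h x : A) = x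
  exact congrArg Subtype.val (Submodule.projectionOnto_apply_left h ⟨x, hx⟩)

omit hcomm in
lemma projFG_eq_zero {x : A} (hx : x ∈ G) : projFG h x = 0 := by
  show (Submodule.linearProjOfIsCompl F G h x : A) = 0
  exact congrArg Subtype.val (Submodule.projectionOnto_apply_of_mem_right h hx)

omit hcomm in
lemma sub_projFG_mem (x : A) : x - projFG h x ∈ G := by
  have hsum : ((F.linearProjOfIsCompl G h x : A) + (G.linearProjOfIsCompl F h.symm x : A)) = x :=
    Submodule.projection_add_projection_eq_self h x
  have h2 : ((G.linearProjOfIsCompl F h.symm) x : A) = x - projFG h x := by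
    rw [eq_sub_iff_add_eq, add_comm]
    exact hsum
  rw [← h2]
  exact ((G.linearProjOfIsCompl F h.symm) x).2

end Proj

variable (hcr : ∀ W : Submodule ℂ A,
      (∀ z : L₁ ⊕ L₂, ∀ x ∈ W, ⁅Sum.elim (⇑μ₁) (⇑μ₂) z, x⁆ ∈ W) →
      ∃ W' : Submodule ℂ A,
        (∀ z : L₁ ⊕ L₂, ∀ x ∈ W', ⁅Sum.elim (⇑μ₁) (⇑μ₂) z, x⁆ ∈ W') ∧ IsCompl W W')

include hcr

lemma isCompl_F1_G1 : IsCompl (invSubmodule (A := A) (⇑μ₁)) (G1 μ₁) := by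
  constructor
  · -- disjoint
    obtain ⟨W₂, hW₂inv, hc₂⟩ := hcr (invSubmodule (⇑μ₁) ⊓ G1 μ₁) (by
      intro z x hx
      refine ⟨?_, ?_⟩
      · have := inv_F1 μ₁ μ₂ hcomm z hx.1
        rwa [mem_comap, adL_apply] at this
      · have := inv_G1 μ₁ μ₂ hcomm z hx.2
        rwa [mem_comap, adL_apply] at this)
    have hG1 : G1 μ₁ ≤ W₂ := by
      rw [G1, span_le]
      rintro y ⟨w, x, rfl⟩
      have hx : x ∈ (invSubmodule (⇑μ₁) ⊓ G1 μ₁) ⊔ W₂ := by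
        rw [hc₂.sup_eq_top]; trivial
      obtain ⟨u, hu, v, hv, rfl⟩ := mem_sup.mp hx
      have hu0 : ⁅μ₁ w, u⁆ = 0 := ((mem_invSubmodule' (⇑μ₁) u).mp hu.1) w
      have : ⁅μ₁ w, u + v⁆ = ⁅μ₁ w, v⁆ := by rw [lie_add, hu0, zero_add]
      rw [SetLike.mem_coe, this]
      exact hW₂inv (Sum.inl w) v hv
    rw [disjoint_iff]
    have h1 : invSubmodule (⇑μ₁) ⊓ G1 μ₁ ≤ (invSubmodule (⇑μ₁) ⊓ G1 μ₁) ⊓ W₂ :=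
      le_inf le_rfl (le_trans inf_le_right hG1)
    rw [← le_bot_iff]
    exact le_trans h1 (by rw [← disjoint_iff.mp hc₂.disjoint])
  · -- codisjoint
    obtain ⟨W', hW'inv, hcW⟩ := hcr (G1 μ₁) (by
      intro z x hx
      have := inv_G1 μ₁ μ₂ hcomm z hx
      rwa [mem_comap, adL_apply] at this)
    have hW'F : W' ≤ invSubmodule (⇑μ₁) := by
      intro v hv
      rw [mem_invSubmodule']
      intro w
      have h1 : ⁅μ₁ w, v⁆ ∈ W' := hW'inv (Sum.inl w) v hv
      have h2 : ⁅μ₁ w, v⁆ ∈ G1 μ₁ := subset_span ⟨w, v, rfl⟩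
      have := disjoint_iff.mp hcW.disjoint
      have hmem : ⁅μ₁ w, v⁆ ∈ G1 μ₁ ⊓ W' := ⟨h2, h1⟩
      rw [this] at hmem
      simpa using hmem
    rw [codisjoint_iff, ← top_le_iff]
    rw [← hcW.sup_eq_top]
    exact sup_le (le_trans le_sup_right le_rfl) (le_trans hW'F le_sup_left)

lemma proj_J1 (h : IsCompl (invSubmodule (A := A) (⇑μ₁)) (G1 μ₁)) (x : A) (hx : x ∈ J1 μ₁) :
    projFG h x ∈ J1 μ₁ ⊓ invSubmodule (⇑μ₁) := by
  obtain ⟨W₃, hW₃inv, hc₃⟩ := hcr (GJ1 μ₁) (by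
    intro z y hy
    have := inv_GJ1 μ₁ μ₂ hcomm z hy
    rwa [mem_comap, adL_apply] at this)
  have hdecomp : J1 μ₁ = GJ1 μ₁ ⊔ (J1 μ₁ ⊓ W₃) := by
    have h1 : J1 μ₁ ⊓ W₃ ⊔ GJ1 μ₁ = J1 μ₁ ⊓ (W₃ ⊔ GJ1 μ₁) :=
      inf_sup_assoc_of_le _ (GJ1_le_J1 μ₁ μ₂ hcomm)
    rw [sup_comm, h1, sup_comm, hc₃.sup_eq_top, inf_top_eq]
  have hJW : J1 μ₁ ⊓ W₃ ≤ invSubmodule (⇑μ₁) := by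
    intro y hy
    rw [mem_invSubmodule']
    intro w
    have h1 : ⁅μ₁ w, y⁆ ∈ W₃ := hW₃inv (Sum.inl w) y hy.2
    have h2 : ⁅μ₁ w, y⁆ ∈ GJ1 μ₁ := subset_span ⟨w, y, hy.1, rfl⟩
    have hmem : ⁅μ₁ w, y⁆ ∈ GJ1 μ₁ ⊓ W₃ := ⟨h2, h1⟩
    rw [disjoint_iff.mp hc₃.disjoint] at hmem
    simpa using hmem
  rw [hdecomp] at hx
  obtain ⟨g, hg, u, hu, rfl⟩ := mem_sup.mp hx
  rw [map_add, projFG_eq_zero h (GJ1_le_G1 μ₁ hg), zero_add, projFG_eq_self h (hJW hu)]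
  refine ⟨?_, hJW hu⟩
  rw [hdecomp]
  exact le_sup_right (α := Submodule ℂ A) hu

omit hcr in
lemma p1_mul_mu2 (h : IsCompl (invSubmodule (A := A) (⇑μ₁)) (G1 μ₁)) (c : A) (z : L₂) :
    projFG h (c * μ₂ z) = projFG h c * μ₂ z := by
  have hc : c * μ₂ z = projFG h c * μ₂ z + (c - projFG h c) * μ₂ z := by
    rw [← add_mul, add_sub_cancel]
  have hG : (c - projFG h c) * μ₂ z ∈ G1 μ₁ := by
    have := G1_mul_mu2 μ₁ μ₂ hcomm z (sub_projFG_mem h c)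
    rwa [mem_comap, LinearMap.mulRight_apply] at this
  rw [hc, map_add, projFG_eq_self h (F1_mul_mu2 μ₁ μ₂ hcomm _ (projFG_mem h c) z),
    projFG_eq_zero h hG, add_zero]

omit hcr in
lemma proj_J2 (h : IsCompl (invSubmodule (A := A) (⇑μ₁)) (G1 μ₁)) (x : A) (hx : x ∈ J2 μ₂) :
    projFG h x ∈ J2F1 μ₁ μ₂ := by
  have hle : J2 μ₂ ≤ (J2F1 μ₁ μ₂).comap (projFG h) := by
    rw [J2, span_le]
    rintro y ⟨a, z, rfl⟩
    simp only [SetLike.mem_coe, mem_comap]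
    rw [p1_mul_mu2 μ₁ μ₂ hcomm h a z]
    exact subset_span ⟨projFG h a, z, projFG_mem h a, rfl⟩
  exact hle hx

lemma crux (h : IsCompl (invSubmodule (A := A) (⇑μ₁)) (G1 μ₁)) (x : A)
    (hxF : x ∈ invSubmodule (Sum.elim (⇑μ₁) (⇑μ₂)))
    (hxJ : x ∈ J1 μ₁ ⊔ J2 μ₂) :
    x ∈ (J1 μ₁ ⊓ invSubmodule (⇑μ₁)) ⊔ J2F1 μ₁ μ₂ := by
  have hxF1 : x ∈ invSubmodule (⇑μ₁) := fun w => hxF (Sum.inl w)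
  obtain ⟨j₁, hj₁, j₂, hj₂, hsum⟩ := mem_sup.mp hxJ
  have hx' : x = projFG h j₁ + projFG h j₂ := by
    rw [← map_add, hsum, projFG_eq_self h hxF1]
  rw [hx']
  exact mem_sup.mpr ⟨projFG h j₁, proj_J1 μ₁ μ₂ hcomm hcr h j₁ hj₁,
    projFG h j₂, proj_J2 μ₁ μ₂ hcomm h j₂ hj₂, rfl⟩

lemma lift_invariant (x : A) (hx1 : x ∈ invSubmodule (⇑μ₁))
    (hx2 : ∀ z : L₂, ⁅μ₂ z, x⁆ ∈ J1 μ₁) :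
    ∃ k, k ∈ invSubmodule (A := A) (Sum.elim (⇑μ₁) (⇑μ₂)) ∧ x - k ∈ J1 μ₁ := by
  obtain ⟨K, hKinv, hK⟩ := hcr (J1 μ₁) (by
    intro z y hy
    have := inv_J1 μ₁ μ₂ hcomm z hy
    rwa [mem_comap, adL_apply] at this)
  refine ⟨x - projFG hK x, ?_, by simpa using projFG_mem hK x⟩
  rw [mem_invSubmodule']
  intro z
  have hk1 : ⁅Sum.elim (⇑μ₁) (⇑μ₂) z, x - projFG hK x⁆ ∈ K :=
    hKinv z _ (sub_projFG_mem hK x)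
  have hk2 : ⁅Sum.elim (⇑μ₁) (⇑μ₂) z, x - projFG hK x⁆ ∈ J1 μ₁ := by
    rw [lie_sub]
    refine sub_mem ?_ ?_
    · cases z with
      | inl w =>
        show ⁅μ₁ w, x⁆ ∈ J1 μ₁
        rw [(mem_invSubmodule' (⇑μ₁) x).mp hx1 w]
        exact zero_mem _
      | inr z' => exact hx2 z'
    · have := inv_J1 μ₁ μ₂ hcomm z (projFG_mem hK x)
      rwa [mem_comap, adL_apply] at this
  have hmem : ⁅Sum.elim (⇑μ₁) (⇑μ₂) z, x - projFG hK x⁆ ∈ J1 μ₁ ⊓ K := ⟨hk2, hk1⟩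
  rw [disjoint_iff.mp hK.disjoint] at hmem
  simpa using hmem

end Lemmas
end QHRStage2
namespace QHRMain

open Submodule QHRStage QHRStage2

variable {A : Type*} [Ring A] [Algebra ℂ A]
variable {L₁ L₂ : Type*} [LieRing L₁] [LieAlgebra ℂ L₁] [LieRing L₂] [LieAlgebra ℂ L₂]
variable (μ₁ : L₁ →ₗ⁅ℂ⁆ A) (μ₂ : L₂ →ₗ⁅ℂ⁆ A)

/-- inclusion of the `𝔤`-invariants into the `𝔤₁`-invariants -/
def toB1 : qhrSubring A (L₁ ⊕ L₂) (Sum.elim (⇑μ₁) (⇑μ₂)) →+* qhrSubring A L₁ (⇑μ₁) where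
  toFun := fun x => ⟨(x : A), fun w => x.2 (Sum.inl w)⟩
  map_one' := rfl
  map_mul' := fun _ _ => rfl
  map_zero' := rfl
  map_add' := fun _ _ => rfl

variable (hcomm : ∀ (x : L₁) (z : L₂), ⁅μ₁ x, μ₂ z⁆ = 0)
variable (μ₂bar : L₂ → QHR A L₁ (⇑μ₁))
variable (hbar : ∀ (z : L₂) (hz : μ₂ z ∈ qhrSubring A L₁ (⇑μ₁)),
  μ₂bar z = qhrMk A L₁ (⇑μ₁) ⟨μ₂ z, hz⟩)

include hcomm

lemma mu2_mem_B1 (z : L₂) : μ₂ z ∈ qhrSubring A L₁ (⇑μ₁) :=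
  fun w => mu_comm μ₁ μ₂ hcomm w z

include hbar

/-- the corestriction of the first-stage quotient map to `C₂` on `𝔤`-invariants -/
noncomputable def rho :
    qhrSubring A (L₁ ⊕ L₂) (Sum.elim (⇑μ₁) (⇑μ₂)) →+*
      qhrSubring (QHR A L₁ (⇑μ₁)) L₂ μ₂bar :=
  RingHom.codRestrict ((qhrMk A L₁ (⇑μ₁)).comp (toB1 μ₁ μ₂))
    (qhrSubring (QHR A L₁ (⇑μ₁)) L₂ μ₂bar)
    (by
      intro x z
      rw [hbar z (mu2_mem_B1 μ₁ μ₂ hcomm z)]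
      show qhrMk A L₁ (⇑μ₁) ⟨μ₂ z, _⟩ * qhrMk A L₁ (⇑μ₁) (toB1 μ₁ μ₂ x)
          = qhrMk A L₁ (⇑μ₁) (toB1 μ₁ μ₂ x) * qhrMk A L₁ (⇑μ₁) ⟨μ₂ z, _⟩
      rw [← map_mul, ← map_mul]
      congr 1
      exact Subtype.ext (x.2 (Sum.inr z)))

/-- the composite `A^𝔤 → 𝔄(𝔄(A,𝔤₁,μ₁),𝔤₂,μ̄₂)` -/
noncomputable def psi :
    qhrSubring A (L₁ ⊕ L₂) (Sum.elim (⇑μ₁) (⇑μ₂)) →+* QHR (QHR A L₁ (⇑μ₁)) L₂ μ₂bar :=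
  (qhrMk (QHR A L₁ (⇑μ₁)) L₂ μ₂bar).comp (rho μ₁ μ₂ hcomm μ₂bar hbar)

/-- elements of `J₂F₁` map into the closure of the second-stage generators -/
lemma target_of_J2F1 (v : A) (hv : v ∈ J2F1 μ₁ μ₂) (hvB : v ∈ qhrSubring A L₁ (⇑μ₁)) :
    qhrMk A L₁ (⇑μ₁) ⟨v, hvB⟩ ∈
      AddSubgroup.closure {y : QHR A L₁ (⇑μ₁) | ∃ (a : QHR A L₁ (⇑μ₁)) (z : L₂), y = a * μ₂bar z} := by
  set S : AddSubgroup (QHR A L₁ (⇑μ₁)) :=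
    AddSubgroup.closure {y : QHR A L₁ (⇑μ₁) | ∃ (a : QHR A L₁ (⇑μ₁)) (z : L₂), y = a * μ₂bar z}
    with hSdef
  have hSmul : ∀ (q u : QHR A L₁ (⇑μ₁)), u ∈ S → q * u ∈ S := by
    intro q u hu
    have hle : S ≤ S.comap (AddMonoidHom.mulLeft q) := by
      rw [hSdef]
      refine AddSubgroup.closure_le _ |>.2 ?_
      rintro b ⟨a, z, rfl⟩
      exact AddSubgroup.subset_closure ⟨q * a, z, (mul_assoc q a (μ₂bar z)).symm⟩
    exact hle hu
  let T : Submodule ℂ A :=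
    { carrier := {x : A | ∃ hx : x ∈ qhrSubring A L₁ (⇑μ₁), qhrMk A L₁ (⇑μ₁) ⟨x, hx⟩ ∈ S}
      add_mem' := by
        rintro x y ⟨hx, hxS⟩ ⟨hy, hyS⟩
        refine ⟨add_mem hx hy, ?_⟩
        have heq : (⟨x + y, add_mem hx hy⟩ : qhrSubring A L₁ (⇑μ₁)) = ⟨x, hx⟩ + ⟨y, hy⟩ := rfl
        rw [heq, map_add]
        exact S.add_mem hxS hyS
      zero_mem' := by
        refine ⟨zero_mem _, ?_⟩
        have heq : (⟨(0 : A), zero_mem _⟩ : qhrSubring A L₁ (⇑μ₁)) = 0 := rfl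
        rw [heq, map_zero]
        exact S.zero_mem
      smul_mem' := by
        rintro c x ⟨hx, hxS⟩
        have hcx : c • x ∈ qhrSubring A L₁ (⇑μ₁) := by
          intro w
          rw [mul_smul_comm, smul_mul_assoc, hx w]
        refine ⟨hcx, ?_⟩
        have hca : (algebraMap ℂ A c) ∈ qhrSubring A L₁ (⇑μ₁) := by
          intro w
          exact (Algebra.commutes c (μ₁ w)).symm
        have heq : (⟨c • x, hcx⟩ : qhrSubring A L₁ (⇑μ₁))
            = ⟨algebraMap ℂ A c, hca⟩ * ⟨x, hx⟩ :=
          Subtype.ext (Algebra.smul_def c x)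
        rw [heq, map_mul]
        exact hSmul _ _ hxS }
  have hle : J2F1 μ₁ μ₂ ≤ T := by
    rw [J2F1, span_le]
    rintro y ⟨b, z, hb, rfl⟩
    have hbB : b ∈ qhrSubring A L₁ (⇑μ₁) := hb
    refine ⟨mul_mem hbB (mu2_mem_B1 μ₁ μ₂ hcomm z), ?_⟩
    have heq : (⟨b * μ₂ z, mul_mem hbB (mu2_mem_B1 μ₁ μ₂ hcomm z)⟩ : qhrSubring A L₁ (⇑μ₁))
        = ⟨b, hbB⟩ * ⟨μ₂ z, mu2_mem_B1 μ₁ μ₂ hcomm z⟩ := rfl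
    rw [heq, map_mul, ← hbar z (mu2_mem_B1 μ₁ μ₂ hcomm z)]
    exact AddSubgroup.subset_closure ⟨qhrMk A L₁ (⇑μ₁) ⟨b, hbB⟩, z, rfl⟩
  obtain ⟨hx, hxS⟩ := hle hv
  have : (⟨v, hvB⟩ : qhrSubring A L₁ (⇑μ₁)) = ⟨v, hx⟩ := rfl
  rw [this]
  exact hxS

/-- elements of the closure of the second-stage generators lift to `J₁ ⊔ J₂` -/
lemma preimage_of_target (u : QHR A L₁ (⇑μ₁))
    (hu : u ∈ AddSubgroup.closure
      {y : QHR A L₁ (⇑μ₁) | ∃ (a : QHR A L₁ (⇑μ₁)) (z : L₂), y = a * μ₂bar z}) :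
    ∃ b : qhrSubring A L₁ (⇑μ₁), (b : A) ∈ J1 μ₁ ⊔ J2 μ₂ ∧ qhrMk A L₁ (⇑μ₁) b = u := by
  refine AddSubgroup.closure_induction ?_ ?_ ?_ ?_ hu
  · rintro y ⟨q, z, rfl⟩
    obtain ⟨b, rfl⟩ := qhrMk_surjective (⇑μ₁) q
    refine ⟨b * ⟨μ₂ z, mu2_mem_B1 μ₁ μ₂ hcomm z⟩, ?_, ?_⟩
    · exact le_sup_right (α := Submodule ℂ A) (subset_span ⟨(b : A), z, rfl⟩)
    · rw [map_mul, ← hbar z (mu2_mem_B1 μ₁ μ₂ hcomm z)]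
  · exact ⟨0, zero_mem _, map_zero _⟩
  · rintro a b _ _ ⟨b₁, hb₁, rfl⟩ ⟨b₂, hb₂, rfl⟩
    exact ⟨b₁ + b₂, add_mem hb₁ hb₂, map_add _ _ _⟩
  · rintro a _ ⟨b₁, hb₁, rfl⟩
    exact ⟨-b₁, neg_mem hb₁, map_neg _ _⟩

end QHRMain
open Submodule QHRStage QHRStage2 QHRMain in
/-- Let `𝔤 = 𝔤₁ ⊕ 𝔤₂` be a direct sum of reductive Lie algebras acting
completely reducibly on an associative algebra `A` with quantum moment map
`μ = μ₁ ⊕ μ₂` (so `[μ₁(𝔤₁), μ₂(𝔤₂)] = 0`).  Then `μ₂` descends to a map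
`μ̄₂ : 𝔤₂ → 𝔄(A, 𝔤₁, μ₁)` (its values `μ₂(z)` are `𝔤₁`-invariant, and `μ̄₂` is the
composite with the quotient map), and there is an isomorphism
`𝔄(A, 𝔤, μ) ≅ 𝔄(𝔄(A, 𝔤₁, μ₁), 𝔤₂, μ̄₂)` — quantum Hamiltonian reduction in stages. -/
theorem stmt4 (A : Type*) [Ring A] [Algebra ℂ A]
    (L₁ L₂ : Type*) [LieRing L₁] [LieAlgebra ℂ L₁] [Module.Finite ℂ L₁]
    [LieRing L₂] [LieAlgebra ℂ L₂] [Module.Finite ℂ L₂]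
    (μ₁ : L₁ →ₗ⁅ℂ⁆ A) (μ₂ : L₂ →ₗ⁅ℂ⁆ A)
    (hcomm : ∀ (x : L₁) (z : L₂), ⁅μ₁ x, μ₂ z⁆ = 0)
    (htr₁ : ∀ z : L₁, LinearMap.trace ℂ L₁ ((LieAlgebra.ad ℂ L₁ z : L₁ →ₗ[ℂ] L₁)) = 0)
    (htr₂ : ∀ z : L₂, LinearMap.trace ℂ L₂ ((LieAlgebra.ad ℂ L₂ z : L₂ →ₗ[ℂ] L₂)) = 0)
    (hcr : ∀ W : Submodule ℂ A,
      (∀ z : L₁ ⊕ L₂, ∀ x ∈ W, ⁅Sum.elim (⇑μ₁) (⇑μ₂) z, x⁆ ∈ W) →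
      ∃ W' : Submodule ℂ A,
        (∀ z : L₁ ⊕ L₂, ∀ x ∈ W', ⁅Sum.elim (⇑μ₁) (⇑μ₂) z, x⁆ ∈ W') ∧ IsCompl W W')
    (μ₂bar : L₂ → QHR A L₁ (⇑μ₁))
    (hμ₂bar : ∀ z : L₂, μ₂bar z = qhrMk A L₁ (⇑μ₁)
      ⟨μ₂ z, fun w => sub_eq_zero.mp (by
        have h := hcomm w z
        rwa [Ring.lie_def] at h)⟩) :
    Nonempty (QHR A (L₁ ⊕ L₂) (Sum.elim (⇑μ₁) (⇑μ₂)) ≃+* QHR (QHR A L₁ (⇑μ₁)) L₂ μ₂bar) := by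
  classical
  have h : IsCompl (invSubmodule (A := A) (⇑μ₁)) (G1 μ₁) := isCompl_F1_G1 μ₁ μ₂ hcomm hcr
  have hbar' : ∀ (z : L₂) (hz : μ₂ z ∈ qhrSubring A L₁ (⇑μ₁)),
      μ₂bar z = qhrMk A L₁ (⇑μ₁) ⟨μ₂ z, hz⟩ := fun z _ => hμ₂bar z
  set ψ := psi μ₁ μ₂ hcomm μ₂bar hbar' with hψ
  -- Key 1: vanishing on the big ideal
  have key1 : ∀ d : qhrSubring A (L₁ ⊕ L₂) (Sum.elim (⇑μ₁) (⇑μ₂)),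
      (d : A) ∈ J1 μ₁ ⊔ J2 μ₂ → ψ d = 0 := by
    intro d hdJ
    show qhrMk (QHR A L₁ (⇑μ₁)) L₂ μ₂bar (rho μ₁ μ₂ hcomm μ₂bar hbar' d) = 0
    rw [qhrMk_eq_zero_iff, mem_qhrIdeal_iff]
    have hdF : (d : A) ∈ invSubmodule (Sum.elim (⇑μ₁) (⇑μ₂)) := d.2
    obtain ⟨u, hu, v, hv, hsum⟩ :=
      mem_sup.mp (crux μ₁ μ₂ hcomm hcr h (d : A) hdF hdJ)
    have huB : u ∈ qhrSubring A L₁ (⇑μ₁) := hu.2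
    have hvB : v ∈ qhrSubring A L₁ (⇑μ₁) := J2F1_le_F1 μ₁ μ₂ hcomm hv
    have hcoe : ((rho μ₁ μ₂ hcomm μ₂bar hbar' d : qhrSubring (QHR A L₁ (⇑μ₁)) L₂ μ₂bar)
        : QHR A L₁ (⇑μ₁)) = qhrMk A L₁ (⇑μ₁) (toB1 μ₁ μ₂ d) := rfl
    rw [hcoe]
    have hd1 : toB1 μ₁ μ₂ d = ⟨u, huB⟩ + ⟨v, hvB⟩ := Subtype.ext hsum.symm
    rw [hd1, map_add]
    have hu0 : qhrMk A L₁ (⇑μ₁) ⟨u, huB⟩ = 0 := by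
      rw [qhrMk_eq_zero_iff, mem_qhrIdeal_iff]
      exact (mem_closure_genSet_iff (⇑μ₁) u).mpr hu.1
    rw [hu0, zero_add]
    exact target_of_J2F1 μ₁ μ₂ hcomm μ₂bar hbar' v hv hvB
  -- Key 2: kernel is contained in the big ideal
  have key2 : ∀ d : qhrSubring A (L₁ ⊕ L₂) (Sum.elim (⇑μ₁) (⇑μ₂)),
      ψ d = 0 → (d : A) ∈ J1 μ₁ ⊔ J2 μ₂ := by
    intro d hd
    have h1 : rho μ₁ μ₂ hcomm μ₂bar hbar' d ∈ qhrIdeal (QHR A L₁ (⇑μ₁)) L₂ μ₂bar :=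
      (qhrMk_eq_zero_iff μ₂bar _).mp hd
    have hS := (mem_qhrIdeal_iff μ₂bar _).mp h1
    have hcoe : ((rho μ₁ μ₂ hcomm μ₂bar hbar' d : qhrSubring (QHR A L₁ (⇑μ₁)) L₂ μ₂bar)
        : QHR A L₁ (⇑μ₁)) = qhrMk A L₁ (⇑μ₁) (toB1 μ₁ μ₂ d) := rfl
    rw [hcoe] at hS
    obtain ⟨b, hbJ, hbeq⟩ := preimage_of_target μ₁ μ₂ hcomm μ₂bar hbar' _ hS
    have hdiff : toB1 μ₁ μ₂ d - b ∈ qhrIdeal A L₁ (⇑μ₁) := by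
      rw [← qhrMk_eq_iff]
      exact hbeq.symm
    have hdiffJ : ((toB1 μ₁ μ₂ d - b : qhrSubring A L₁ (⇑μ₁)) : A) ∈ J1 μ₁ :=
      (mem_closure_genSet_iff (⇑μ₁) _).mp ((mem_qhrIdeal_iff (⇑μ₁) _).mp hdiff)
    have hfin : (d : A) = ((toB1 μ₁ μ₂ d - b : qhrSubring A L₁ (⇑μ₁)) : A) + (b : A) := by
      show (d : A) = ((d : A) - (b : A)) + (b : A)
      abel
    rw [hfin]
    exact add_mem (le_sup_left (α := Submodule ℂ A) hdiffJ) hbJ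
  -- the lifted map
  have hresp : ∀ a b, (qhrIdeal A (L₁ ⊕ L₂) (Sum.elim (⇑μ₁) (⇑μ₂))).ringCon a b →
      ψ a = ψ b := by
    intro a b hab
    have h1 : a - b ∈ qhrIdeal A (L₁ ⊕ L₂) (Sum.elim (⇑μ₁) (⇑μ₂)) :=
      (TwoSidedIdeal.rel_iff _ _ _).mp hab
    have h2 : ((a - b : qhrSubring A (L₁ ⊕ L₂) (Sum.elim (⇑μ₁) (⇑μ₂))) : A) ∈ J1 μ₁ ⊔ J2 μ₂ := by
      rw [← span_genSet_sum μ₁ μ₂]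
      exact (mem_closure_genSet_iff _ _).mp ((mem_qhrIdeal_iff _ _).mp h1)
    have h3 := key1 _ h2
    rw [map_sub, sub_eq_zero] at h3
    exact h3
  refine ⟨RingEquiv.ofBijective
    (ringConLift (qhrIdeal A (L₁ ⊕ L₂) (Sum.elim (⇑μ₁) (⇑μ₂))).ringCon ψ hresp) ⟨?_, ?_⟩⟩
  · -- injective
    intro x y hxy
    obtain ⟨a, rfl⟩ := qhrMk_surjective (Sum.elim (⇑μ₁) (⇑μ₂)) x
    obtain ⟨b, rfl⟩ := qhrMk_surjective (Sum.elim (⇑μ₁) (⇑μ₂)) y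
    have hab : ψ a = ψ b := hxy
    have h0 : ψ (a - b) = 0 := by rw [map_sub, hab, sub_self]
    have h2 := key2 _ h0
    rw [qhrMk_eq_iff, mem_qhrIdeal_iff]
    refine (mem_closure_genSet_iff _ _).mpr ?_
    rw [span_genSet_sum μ₁ μ₂]
    exact h2
  · -- surjective
    intro q
    obtain ⟨c, rfl⟩ := qhrMk_surjective μ₂bar q
    obtain ⟨x₀, hx₀⟩ := qhrMk_surjective (⇑μ₁) (c : QHR A L₁ (⇑μ₁))
    have hbr : ∀ z : L₂, ⁅μ₂ z, (x₀ : A)⁆ ∈ J1 μ₁ := by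
      intro z
      have hc := c.2 z
      rw [hbar' z (mu2_mem_B1 μ₁ μ₂ hcomm z), ← hx₀, ← map_mul, ← map_mul,
        qhrMk_eq_iff, mem_qhrIdeal_iff] at hc
      have := (mem_closure_genSet_iff (⇑μ₁) _).mp hc
      have hcoe2 : ((⟨μ₂ z, mu2_mem_B1 μ₁ μ₂ hcomm z⟩ * x₀ - x₀ * ⟨μ₂ z, mu2_mem_B1 μ₁ μ₂ hcomm z⟩
          : qhrSubring A L₁ (⇑μ₁)) : A) = ⁅μ₂ z, (x₀ : A)⁆ := by
        rw [Ring.lie_def]; rfl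
      rwa [hcoe2] at this
    obtain ⟨k, hkF, hkJ⟩ := lift_invariant μ₁ μ₂ hcomm hcr (x₀ : A) x₀.2 hbr
    refine ⟨qhrMk A (L₁ ⊕ L₂) (Sum.elim (⇑μ₁) (⇑μ₂)) ⟨k, hkF⟩, ?_⟩
    have hlift : (ringConLift (qhrIdeal A (L₁ ⊕ L₂) (Sum.elim (⇑μ₁) (⇑μ₂))).ringCon ψ hresp)
        (qhrMk A (L₁ ⊕ L₂) (Sum.elim (⇑μ₁) (⇑μ₂)) ⟨k, hkF⟩) = ψ ⟨k, hkF⟩ := rfl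
    rw [hlift]
    show qhrMk (QHR A L₁ (⇑μ₁)) L₂ μ₂bar (rho μ₁ μ₂ hcomm μ₂bar hbar' ⟨k, hkF⟩)
        = qhrMk (QHR A L₁ (⇑μ₁)) L₂ μ₂bar c
    congr 1
    refine Subtype.ext ?_
    have hcoe : ((rho μ₁ μ₂ hcomm μ₂bar hbar' ⟨k, hkF⟩ : qhrSubring (QHR A L₁ (⇑μ₁)) L₂ μ₂bar)
        : QHR A L₁ (⇑μ₁)) = qhrMk A L₁ (⇑μ₁) (toB1 μ₁ μ₂ ⟨k, hkF⟩) := rfl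
    rw [hcoe, ← hx₀]
    rw [qhrMk_eq_iff, mem_qhrIdeal_iff]
    refine (mem_closure_genSet_iff (⇑μ₁) _).mpr ?_
    show ((toB1 μ₁ μ₂ ⟨k, hkF⟩ : qhrSubring A L₁ (⇑μ₁)) : A) - (x₀ : A) ∈ J1 μ₁
    have : ((toB1 μ₁ μ₂ ⟨k, hkF⟩ : qhrSubring A L₁ (⇑μ₁)) : A) - (x₀ : A) = -((x₀ : A) - k) := by
      show k - (x₀ : A) = -((x₀ : A) - k); abel
    rw [this]
    exact neg_mem hkJ
end

section
/- Restriction of differential operators from Hom(ℂ^{m}, ℂ^{r}) (m < r) to the open subset Inc(ℂ^m, ℂ^r) of injective maps is an isomorphism of algebras 𝒟(Hom(ℂ^m, ℂ^r)) ≅ 𝒟(Inc(ℂ^m, ℂ^r)), because the complement has codimension ≥ 2. -/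
set_option synthInstance.maxHeartbeats 1000000
set_option maxHeartbeats 1000000

/-- One step of the Grothendieck filtration: operators whose commutator with every
multiplication operator lies in `W`. -/
noncomputable def diffOpStep (R : Type*) [CommRing R] [Algebra ℂ R]
    (W : Submodule ℂ (Module.End ℂ R)) : Submodule ℂ (Module.End ℂ R) where
  carrier := {φ | ∀ r : R, φ * LinearMap.mulLeft ℂ r - LinearMap.mulLeft ℂ r * φ ∈ W}
  add_mem' := by
    intro a b ha hb r
    have h : (a + b) * LinearMap.mulLeft ℂ r - LinearMap.mulLeft ℂ r * (a + b)
        = (a * LinearMap.mulLeft ℂ r - LinearMap.mulLeft ℂ r * a)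
          + (b * LinearMap.mulLeft ℂ r - LinearMap.mulLeft ℂ r * b) := by noncomm_ring
    rw [h]; exact W.add_mem (ha r) (hb r)
  zero_mem' := by intro r; simp
  smul_mem' := by
    intro c a ha r
    have h : (c • a) * LinearMap.mulLeft ℂ r - LinearMap.mulLeft ℂ r * (c • a)
        = c • (a * LinearMap.mulLeft ℂ r - LinearMap.mulLeft ℂ r * a) := by
      rw [smul_sub, smul_mul_assoc, mul_smul_comm]
    rw [h]; exact W.smul_mem c (ha r)

/-- The filtration of the algebra of (Grothendieck) differential operators on a
commutative `ℂ`-algebra `R`: `𝒟⁰ = {φ | [φ, r] = 0 ∀ r} (= R)` and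
`𝒟ⁿ⁺¹ = {φ | [φ, r] ∈ 𝒟ⁿ ∀ r}`; the algebra of differential operators is `⋃ₙ 𝒟ⁿ`. -/
noncomputable def diffOpFil (R : Type*) [CommRing R] [Algebra ℂ R] :
    ℕ → Submodule ℂ (Module.End ℂ R)
  | 0 => diffOpStep R ⊥
  | n + 1 => diffOpStep R (diffOpFil R n)

lemma aux_adjoin_le {R K : Type*} [CommRing R] [Algebra ℂ R] [Field K] [Algebra ℂ K]
    [Algebra R K] [IsScalarTower ℂ R K] (d : R) {x : K}
    (hx : x ∈ Algebra.adjoin ℂ (Set.range (algebraMap R K) ∪ {(algebraMap R K d)⁻¹})) :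
    ∃ (k : ℕ) (a : R), x * (algebraMap R K d) ^ k = algebraMap R K a := by
  set φ := algebraMap R K with hφ
  set T : Subalgebra ℂ K :=
  { carrier := {y : K | ∃ (k : ℕ) (a : R), y * φ d ^ k = φ a}
    mul_mem' := by
      rintro y z ⟨k, a, ha⟩ ⟨l, b, hb⟩
      exact ⟨k + l, a * b, by rw [pow_add, map_mul, ← ha, ← hb]; ring⟩
    one_mem' := ⟨0, 1, by simp⟩
    add_mem' := by
      rintro y z ⟨k, a, ha⟩ ⟨l, b, hb⟩
      refine ⟨k + l, a * d ^ l + b * d ^ k, ?_⟩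
      rw [map_add, map_mul, map_mul, map_pow, map_pow, ← ha, ← hb, pow_add]
      ring
    zero_mem' := ⟨0, 0, by simp⟩
    algebraMap_mem' := fun c => ⟨0, algebraMap ℂ R c, by
      rw [pow_zero, mul_one, ← IsScalarTower.algebraMap_apply]⟩ } with hT
  have hle : Algebra.adjoin ℂ (Set.range φ ∪ {(φ d)⁻¹}) ≤ T := by
    rw [Algebra.adjoin_le_iff]
    rintro y (⟨a, rfl⟩ | hy)
    · exact ⟨0, a, by simp⟩
    · rw [Set.mem_singleton_iff] at hy
      subst hy
      by_cases hd : φ d = 0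
      · exact ⟨0, 0, by simp [hd]⟩
      · exact ⟨1, 1, by rw [pow_one, inv_mul_cancel₀ hd, map_one]⟩
  exact hle hx

section Transport

variable {R S : Type*} [CommRing R] [Algebra ℂ R] [CommRing S] [Algebra ℂ S]

lemma aux_conj_mul (e : R ≃ₐ[ℂ] S) (f g : Module.End ℂ R) :
    e.toLinearEquiv.conj (f * g) = e.toLinearEquiv.conj f * e.toLinearEquiv.conj g := by
  rw [Module.End.mul_eq_comp, Module.End.mul_eq_comp, LinearEquiv.conj_comp]

lemma aux_conj_mulLeft (e : R ≃ₐ[ℂ] S) (s : S) :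
    e.toLinearEquiv.conj (LinearMap.mulLeft ℂ (e.symm s)) = LinearMap.mulLeft ℂ s := by
  apply LinearMap.ext; intro x
  rw [LinearEquiv.conj_apply_apply]
  rw [← AlgEquiv.toLinearEquiv_symm]
  simp only [LinearMap.mulLeft_apply, AlgEquiv.toLinearEquiv_apply, map_mul,
    AlgEquiv.apply_symm_apply]

lemma aux_conj_conj (e : R ≃ₐ[ℂ] S) (f : Module.End ℂ R) :
    e.symm.toLinearEquiv.conj (e.toLinearEquiv.conj f) = f := by
  apply LinearMap.ext; intro x
  rw [LinearEquiv.conj_apply_apply, LinearEquiv.conj_apply_apply]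
  simp only [← AlgEquiv.toLinearEquiv_symm]
  simp only [AlgEquiv.toLinearEquiv_apply, AlgEquiv.symm_symm, AlgEquiv.symm_apply_apply,
    AlgEquiv.apply_symm_apply]

lemma aux_step_map (e : R ≃ₐ[ℂ] S) (W : Submodule ℂ (Module.End ℂ R)) :
    Submodule.map e.toLinearEquiv.conj.toLinearMap (diffOpStep R W)
      = diffOpStep S (Submodule.map e.toLinearEquiv.conj.toLinearMap W) := by
  have hmemR : ∀ (W' : Submodule ℂ (Module.End ℂ R)) (ψ : Module.End ℂ R),
      ψ ∈ diffOpStep R W' ↔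
        ∀ s, ψ * LinearMap.mulLeft ℂ s - LinearMap.mulLeft ℂ s * ψ ∈ W' := fun _ _ => Iff.rfl
  have hmemS : ∀ (W' : Submodule ℂ (Module.End ℂ S)) (ψ : Module.End ℂ S),
      ψ ∈ diffOpStep S W' ↔
        ∀ s, ψ * LinearMap.mulLeft ℂ s - LinearMap.mulLeft ℂ s * ψ ∈ W' := fun _ _ => Iff.rfl
  apply le_antisymm
  · rintro ψ ⟨φ₀, hφ₀, rfl⟩
    rw [hmemS]
    intro s
    have key : e.toLinearEquiv.conj
        (φ₀ * LinearMap.mulLeft ℂ (e.symm s) - LinearMap.mulLeft ℂ (e.symm s) * φ₀)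
        = e.toLinearEquiv.conj.toLinearMap φ₀ * LinearMap.mulLeft ℂ s
          - LinearMap.mulLeft ℂ s * e.toLinearEquiv.conj.toLinearMap φ₀ := by
      rw [map_sub, aux_conj_mul, aux_conj_mul, aux_conj_mulLeft]
      rfl
    rw [← key]
    exact Submodule.mem_map_of_mem ((hmemR W φ₀).1 hφ₀ (e.symm s))
  · intro ψ hψ
    rw [hmemS] at hψ
    refine Submodule.mem_map.mpr ⟨e.symm.toLinearEquiv.conj ψ, ?_, ?_⟩
    · rw [hmemR]
      intro t
      have h1 := hψ (e t)
      obtain ⟨w, hw, hw2⟩ := h1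
      have key : e.symm.toLinearEquiv.conj
          (ψ * LinearMap.mulLeft ℂ (e t) - LinearMap.mulLeft ℂ (e t) * ψ)
          = e.symm.toLinearEquiv.conj ψ * LinearMap.mulLeft ℂ t
            - LinearMap.mulLeft ℂ t * e.symm.toLinearEquiv.conj ψ := by
        have h2 : (e t) = e.symm.symm t := by rw [AlgEquiv.symm_symm]
        rw [map_sub, aux_conj_mul, aux_conj_mul, h2, aux_conj_mulLeft]
      rw [← key, ← hw2]
      show e.symm.toLinearEquiv.conj (e.toLinearEquiv.conj w) ∈ W
      rw [aux_conj_conj]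
      exact hw
    · have h4 := aux_conj_conj e.symm ψ
      rw [AlgEquiv.symm_symm] at h4
      exact h4

lemma aux_fil_map (e : R ≃ₐ[ℂ] S) (n : ℕ) :
    Submodule.map e.toLinearEquiv.conj.toLinearMap (diffOpFil R n) = diffOpFil S n := by
  induction n with
  | zero =>
      show Submodule.map _ (diffOpStep R ⊥) = diffOpStep S ⊥
      rw [aux_step_map, Submodule.map_bot]
  | succ n ih =>
      show Submodule.map _ (diffOpStep R (diffOpFil R n)) = diffOpStep S (diffOpFil S n)
      rw [aux_step_map, ih]

end Transport


open MvPolynomial in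
lemma aux_eq_C_of_vars_empty {σ : Type*} {p : MvPolynomial σ ℂ} (h : p.vars = ∅) :
    ∃ c, p = C c := by
  classical
  refine ⟨p.coeff 0, MvPolynomial.ext _ _ fun d => ?_⟩
  rw [coeff_C]
  split_ifs with hd
  · rw [← hd]
  · have hd' : d ≠ 0 := fun hh => hd hh.symm
    by_contra hc
    obtain ⟨i, hi⟩ := Finsupp.support_nonempty_iff.2 hd'
    have : i ∈ p.vars := (mem_vars i).2 ⟨d, mem_support_iff.2 hc, hi⟩
    simp [h] at this

open MvPolynomial in
lemma aux_no_common_zero {σ : Type*} [DecidableEq σ] {v : σ} {p : MvPolynomial σ ℂ}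
    (hv : v ∈ p.vars) (D' : MvPolynomial {i : σ // i ≠ v} ℂ) (hD : D' ≠ 0)
    (hdvd : p ∣ rename (Subtype.val) D') : False := by
  classical
  set e : Option {i : σ // i ≠ v} ≃ σ := Equiv.optionSubtypeNe v with he
  set E : MvPolynomial σ ℂ ≃ₐ[ℂ] Polynomial (MvPolynomial {i : σ // i ≠ v} ℂ) :=
    (renameEquiv ℂ e.symm).trans (optionEquivLeft ℂ {i : σ // i ≠ v}) with hE
  have hp0 : p ≠ 0 := by
    intro h0
    rw [h0, vars_0] at hv
    simp at hv
  -- `E` of a polynomial not involving `v` is constant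
  have hEC : ∀ q0 : MvPolynomial {i : σ // i ≠ v} ℂ,
      E (rename (fun j : {i : σ // i ≠ v} => e (some j)) q0) = Polynomial.C q0 := by
    intro q0
    induction q0 using MvPolynomial.induction_on with
    | C a =>
        simp [hE, AlgEquiv.trans_apply, renameEquiv_apply, rename_C, optionEquivLeft_C]
    | add f g hf hg => rw [map_add, map_add, hf, hg, map_add]
    | mul_X f i hf =>
        rw [map_mul, map_mul, hf, rename_X]
        have : E (X (e (some i)) : MvPolynomial σ ℂ) = Polynomial.C (X i) := by
          simp [hE, AlgEquiv.trans_apply, renameEquiv_apply, rename_X,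
            Equiv.symm_apply_apply, optionEquivLeft_X_some]
        rw [this, ← Polynomial.C_mul]
  set q : Polynomial (MvPolynomial {i : σ // i ≠ v} ℂ) := E p with hq
  have hq0 : q ≠ 0 := fun h0 => hp0 (by
    have := congrArg E.symm h0
    simpa [hq] using this)
  have hdeg : q.natDegree ≠ 0 := by
    intro h0
    obtain ⟨q0, hq0'⟩ := Polynomial.natDegree_eq_zero.mp h0
    have hpeq : p = rename (fun j : {i : σ // i ≠ v} => e (some j)) q0 := by
      have := hEC q0
      rw [hq0'] at this
      exact E.injective this.symm
    have : v ∈ (rename (fun j : {i : σ // i ≠ v} => e (some j)) q0).vars := hpeq ▸ hv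
    have hmem := vars_rename _ q0 this
    simp only [Finset.mem_image] at hmem
    obtain ⟨j, _, hj⟩ := hmem
    exact j.2 (by simpa [he] using hj)
  -- choose a point where leading coefficient and D' are nonzero
  have hc0 : q.leadingCoeff ≠ 0 := Polynomial.leadingCoeff_ne_zero.mpr hq0
  have hcD : q.leadingCoeff * D' ≠ 0 := mul_ne_zero hc0 hD
  have hw : ∃ w : {i : σ // i ≠ v} → ℂ, eval w (q.leadingCoeff * D') ≠ 0 := by
    by_contra hcon
    push_neg at hcon
    exact hcD (MvPolynomial.funext (fun x => by rw [hcon x, map_zero]))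
  obtain ⟨w, hw⟩ := hw
  have hwc : eval w q.leadingCoeff ≠ 0 := fun h0 => hw (by rw [map_mul, h0, zero_mul])
  have hwD : eval w D' ≠ 0 := fun h0 => hw (by rw [map_mul, h0, mul_zero])
  set qb : Polynomial ℂ := q.map (eval w) with hqb
  have hqbdeg : qb.degree ≠ 0 := by
    rw [hqb, Polynomial.degree_map_eq_of_leadingCoeff_ne_zero _ hwc]
    rw [Polynomial.degree_eq_natDegree hq0]
    exact_mod_cast hdeg
  obtain ⟨t0, ht0⟩ := IsAlgClosed.exists_root qb hqbdeg
  set z : σ → ℂ := fun i => if h : i = v then t0 else w ⟨i, h⟩ with hz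
  -- eval z ∘ (anything) computation
  have hcomm : (Polynomial.eval₂RingHom (MvPolynomial.eval w) t0).comp
      (E : MvPolynomial σ ℂ →+* Polynomial (MvPolynomial {i : σ // i ≠ v} ℂ)) = (MvPolynomial.eval z) := by
    apply MvPolynomial.ringHom_ext
    · intro c
      simp [hE, AlgEquiv.trans_apply, renameEquiv_apply, rename_C, optionEquivLeft_C, hz]
    · intro i
      by_cases hiv : i = v
      · rw [hiv]
        have h1 : (E (X v) : Polynomial (MvPolynomial {i : σ // i ≠ v} ℂ)) = Polynomial.X := by
          simp [hE, AlgEquiv.trans_apply, renameEquiv_apply, rename_X, he,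
            Equiv.optionSubtypeNe_symm_self, optionEquivLeft_X_none]
        simp [h1, hz]
      · have h1 : (E (X i) : Polynomial (MvPolynomial {i : σ // i ≠ v} ℂ)) = Polynomial.C (X ⟨i, hiv⟩) := by
          simp [hE, AlgEquiv.trans_apply, renameEquiv_apply, rename_X, he,
            Equiv.optionSubtypeNe_symm_of_ne hiv, optionEquivLeft_X_some]
        simp [h1, hz, hiv]
  have hevalp : eval z p = 0 := by
    have := congrArg (fun f : MvPolynomial σ ℂ →+* ℂ => f p) hcomm
    simp only [RingHom.comp_apply] at this
    rw [← this]
    show Polynomial.eval₂ (MvPolynomial.eval w) t0 (E p) = 0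
    rw [Polynomial.eval₂_eq_eval_map]
    exact ht0
  have hevalD : eval z (rename (Subtype.val) D') = eval w D' := by
    have hfun : z ∘ (Subtype.val : {i : σ // i ≠ v} → σ) = w := by
      funext j
      simp only [Function.comp_apply, hz]
      rw [dif_neg j.2]
    rw [eval_rename, hfun]
  obtain ⟨u, hu⟩ := hdvd
  rw [hu, map_mul, hevalp, zero_mul] at hevalD
  exact hwD hevalD.symm

open MvPolynomial in
/-- a generic maximal minor is nonzero -/
lemma aux_det_ne_zero {m r : ℕ} (f : Fin m ↪ Fin r) :
    (Matrix.det (Matrix.of fun a b : Fin m => (X (b, f a) : MvPolynomial (Fin m × Fin r) ℂ)))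
      ≠ 0 := by
  classical
  intro h0
  have := congrArg (MvPolynomial.eval (fun bc : Fin m × Fin r => if f bc.1 = bc.2 then (1:ℂ) else 0)) h0
  rw [map_zero, RingHom.map_det] at this
  have hmat : (Matrix.of fun a b : Fin m => (X (b, f a) : MvPolynomial (Fin m × Fin r) ℂ)).map
      (MvPolynomial.eval (fun bc : Fin m × Fin r => if f bc.1 = bc.2 then (1:ℂ) else 0))
      = (1 : Matrix (Fin m) (Fin m) ℂ) := by
    ext a b
    simp only [Matrix.map_apply, Matrix.of_apply, eval_X, Matrix.one_apply]
    by_cases hab : a = b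
    · simp [hab]
    · rw [if_neg (fun h => hab (f.injective h).symm), if_neg hab]
  rw [RingHom.mapMatrix_apply, hmat, Matrix.det_one] at this
  exact one_ne_zero this

open MvPolynomial in
/-- no prime divides all the maximal minors -/
lemma aux_no_common_prime {m r : ℕ} (hm : 0 < m) (hmr : m < r)
    {p : MvPolynomial (Fin m × Fin r) ℂ} (hp : Prime p)
    (hall : ∀ f : Fin m ↪ Fin r,
      p ∣ Matrix.det (Matrix.of fun a b : Fin m => (X (b, f a) : MvPolynomial (Fin m × Fin r) ℂ))) :
    False := by
  classical
  -- p has a variable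
  have hvars : p.vars ≠ ∅ := by
    intro hemp
    obtain ⟨c, rfl⟩ := aux_eq_C_of_vars_empty hemp
    have hc : c ≠ 0 := by
      intro h0; rw [h0, map_zero] at hp; exact hp.ne_zero rfl
    exact hp.not_unit (IsUnit.map MvPolynomial.C (Ne.isUnit hc))
  obtain ⟨v, hv⟩ := Finset.nonempty_iff_ne_empty.2 hvars
  obtain ⟨a0, c0⟩ := v
  -- an embedding avoiding column c0
  obtain ⟨r', rfl⟩ : ∃ r', r = r' + 1 := ⟨r - 1, by omega⟩
  set f : Fin m ↪ Fin (r' + 1) :=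
    (Fin.castLEEmb (by omega : m ≤ r')).trans (Fin.succAboveEmb c0) with hf
  have hfne : ∀ a : Fin m, f a ≠ c0 := fun a => Fin.succAbove_ne c0 _
  -- the minor for f as a polynomial avoiding the variable (a0, c0)
  set g : Fin m × Fin m → {i : Fin m × Fin (r' + 1) // i ≠ (a0, c0)} :=
    (fun x => ⟨(x.1, f x.2), fun h => hfne x.2 (congrArg Prod.snd h)⟩) with hg
  set D' : MvPolynomial {i : Fin m × Fin (r' + 1) // i ≠ (a0, c0)} ℂ :=
    rename g (Matrix.det (Matrix.of fun a b : Fin m =>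
      (X (b, a) : MvPolynomial (Fin m × Fin m) ℂ))) with hD'
  have hDf : rename (Subtype.val) D'
      = Matrix.det (Matrix.of fun a b : Fin m =>
          (X (b, f a) : MvPolynomial (Fin m × Fin (r' + 1)) ℂ)) := by
    rw [hD', rename_rename]
    rw [AlgHom.map_det]
    congr 1
    ext a b
    simp [AlgHom.mapMatrix_apply, hg, rename_X]
  exact aux_no_common_zero hv D'
    (fun h0 => aux_det_ne_zero f (by rw [← hDf, h0, map_zero]))
    (by rw [hDf]; exact hall f)
/-- Restriction of differential operators from `Hom(ℂ^m, ℂ^r)` (`m < r`)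
to the open subset `Inc(ℂ^m, ℂ^r)` of injective maps is an isomorphism of algebras
`𝒟(Hom(ℂ^m, ℂ^r)) ≅ 𝒟(Inc(ℂ^m, ℂ^r))`, because the complement (rank `< m` locus)
has codimension `≥ 2`.  Here `O(Hom) = R = ℂ[x_{ik}]`, and the ring of regular
functions on `Inc` is `S = ⋂_d R[1/d] ⊆ Frac(R)`, the intersection over all maximal
minors `d` (the union of the principal opens `D(d)` being `Inc`); the claim is that
restriction of functions `R → S` is an isomorphism, and that conjugation by it maps
each filtration piece `𝒟ⁿ(Hom)` of the differential operators onto `𝒟ⁿ(Inc)`. -/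
theorem stmt8 (m r : ℕ) (hm : 0 < m) (hmr : m < r)
    (S : Subalgebra ℂ (FractionRing (MvPolynomial (Fin m × Fin r) ℂ)))
    (hS : S = ⨅ f : Fin m ↪ Fin r,
      Algebra.adjoin ℂ
        (Set.range (algebraMap (MvPolynomial (Fin m × Fin r) ℂ)
            (FractionRing (MvPolynomial (Fin m × Fin r) ℂ))) ∪
          {(algebraMap (MvPolynomial (Fin m × Fin r) ℂ)
              (FractionRing (MvPolynomial (Fin m × Fin r) ℂ))
              (Matrix.det (Matrix.of fun a b : Fin m => MvPolynomial.X (b, f a))))⁻¹})) :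
    ∃ e : MvPolynomial (Fin m × Fin r) ℂ ≃ₐ[ℂ] S,
      (∀ x : MvPolynomial (Fin m × Fin r) ℂ,
        (e x : FractionRing (MvPolynomial (Fin m × Fin r) ℂ))
          = algebraMap (MvPolynomial (Fin m × Fin r) ℂ)
              (FractionRing (MvPolynomial (Fin m × Fin r) ℂ)) x) ∧
      ∀ n : ℕ,
        Submodule.map (e.toLinearEquiv.conj.toLinearMap)
            (diffOpFil (MvPolynomial (Fin m × Fin r) ℂ) n)
          = diffOpFil S n := by
  classical
  set R := MvPolynomial (Fin m × Fin r) ℂ with hR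
  set K := FractionRing R with hK
  set φ := algebraMap R K with hφ
  have hinj : Function.Injective φ := IsFractionRing.injective R K
  have hrange : ∀ x : R, φ x ∈ S := by
    intro x
    rw [hS, Algebra.mem_iInf]
    intro f
    exact Algebra.subset_adjoin (Or.inl ⟨x, rfl⟩)
  set ψ : R →ₐ[ℂ] S := ((IsScalarTower.toAlgHom ℂ R K).codRestrict S hrange) with hψ
  have hψinj : Function.Injective ψ := fun a b h => hinj (congrArg Subtype.val h)
  have hsurj : Function.Surjective ψ := by
    rintro ⟨x, hxS⟩
    have hloc : ∀ f : Fin m ↪ Fin r, ∃ (k : ℕ) (a : R),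
        x * (φ (Matrix.det (Matrix.of fun a b : Fin m => MvPolynomial.X (b, f a)))) ^ k
          = φ a := by
      intro f
      apply aux_adjoin_le
      rw [hS, Algebra.mem_iInf] at hxS
      exact hxS f
    set nu := IsFractionRing.num R x with hnu
    set de := IsFractionRing.den R x with hde
    have hde0 : (de : R) ≠ 0 := nonZeroDivisors.coe_ne_zero de
    have hdeK : φ (de : R) ≠ 0 := fun h => hde0 (hinj (by rw [h, map_zero]))
    have hxeq : x * φ (de : R) = φ nu := by
      have h1 := IsFractionRing.mk'_num_den' R x
      rw [← h1, div_mul_cancel₀ _ hdeK]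
    have hdvd : ∀ f : Fin m ↪ Fin r, ∃ k : ℕ,
        (de : R) ∣ (Matrix.det (Matrix.of fun a b : Fin m => MvPolynomial.X (b, f a))) ^ k := by
      intro f
      obtain ⟨k, a, hka⟩ := hloc f
      set d := Matrix.det (Matrix.of fun a b : Fin m => (MvPolynomial.X (b, f a) : R)) with hd
      refine ⟨k, ?_⟩
      have h1 : φ (nu * d ^ k) = φ (a * (de : R)) := by
        rw [map_mul, map_mul, map_pow, ← hxeq, ← hka]
        ring
      have h2 : nu * d ^ k = a * (de : R) := hinj h1
      have h3 : (de : R) ∣ d ^ k * nu := ⟨a, by linear_combination h2⟩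
      exact (IsFractionRing.num_den_reduced R x).symm.dvd_of_dvd_mul_right h3
    have hunit : IsUnit (de : R) := by
      by_contra hnunit
      obtain ⟨q, hqirr, hqdvd⟩ := WfDvdMonoid.exists_irreducible_factor hnunit hde0
      have hq : Prime q := (UniqueFactorizationMonoid.irreducible_iff_prime).1 hqirr
      apply aux_no_common_prime hm hmr hq
      intro f
      obtain ⟨k, hk⟩ := hdvd f
      exact hq.dvd_of_dvd_pow (dvd_trans hqdvd hk)
    obtain ⟨u, hu⟩ := hunit
    refine ⟨nu * ↑u⁻¹, ?_⟩
    apply Subtype.ext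
    show φ (nu * ↑u⁻¹) = x
    have hcalc : nu * ↑u⁻¹ * (de : R) = nu := by
      rw [mul_assoc, ← hu, Units.inv_mul, mul_one]
    have hfin : φ (nu * ↑u⁻¹) * φ (de : R) = x * φ (de : R) := by
      rw [← map_mul, hcalc, ← hxeq]
    exact mul_right_cancel₀ hdeK hfin
  refine ⟨AlgEquiv.ofBijective ψ ⟨hψinj, hsurj⟩, fun x => rfl, fun n => ?_⟩
  have h1 := aux_fil_map (R := MvPolynomial (Fin m × Fin r) ℂ) (S := ↥S)
    (AlgEquiv.ofBijective ψ ⟨hψinj, hsurj⟩) n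
  exact h1
end
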